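/- arXiv:1408.2117 — 5 statements merged into one kernel-verified Lean document; each statement's English description precedes it below -/
import Mathlib

section
/- If [v0, v1, v2] is a path in a stable tree T marked by X (v0, v1, v2 distinct vertices with v1 adjacent to both v0 and v2), then B_{v1}(v2) ∩ X is a strict subset of B_{v0}(v1) ∩ X. -/
open SimpleGraph

/-- The branch of a vertex `v` in the direction of a neighbor `u`. -/
def Branch {V : Type*} (G : SimpleGraph V) (v u : V) : Set V :=
  {w | ∃ p : G.Walk u w, v ∉ p.support}

/-- A stable combinatorial tree marked by `X`. -/
structure MarkedStableTree (X V : Type*) (G : SimpleGraph V) (m : X → V) : Prop where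
  tree : G.IsTree
  inj : Function.Injective m
  leaf_iff : ∀ v, (G.neighborSet v).ncard = 1 ↔ v ∈ Set.range m
  stable : ∀ v, v ∉ Set.range m → 3 ≤ (G.neighborSet v).ncard

section Aux

variable {V : Type*} {G : SimpleGraph V}

lemma mem_branch_self {v u : V} (h : G.Adj v u) : u ∈ Branch G v u :=
  ⟨SimpleGraph.Walk.nil, by simp [h.ne]⟩

lemma not_mem_branch_self (v u : V) : v ∉ Branch G v u := by
  rintro ⟨p, hp⟩
  exact hp p.end_mem_support

lemma branch_subset (hT : G.IsAcyclic) {a b c : V}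
    (hab : G.Adj a b) (hbc : G.Adj b c) (hac : a ≠ c) :
    Branch G b c ⊆ Branch G a b := by
  classical
  rintro w ⟨p, hp⟩
  have hq : b ∉ p.bypass.support := fun h => hp (p.support_bypass_subset h)
  set q := p.bypass with hqdef
  have hqpath : q.IsPath := p.bypass_isPath
  have haq : a ∉ q.support := by
    intro ha
    have hb : b ∉ (q.takeUntil a ha).support := fun h =>
      hq (SimpleGraph.Walk.support_takeUntil_subset _ _ h)
    have h1path : (q.takeUntil a ha).IsPath := hqpath.takeUntil ha
    let r : G.Walk c a := SimpleGraph.Walk.cons hbc.symm (SimpleGraph.Walk.cons hab.symm SimpleGraph.Walk.nil)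
    have hrpath : r.IsPath := by
      simp [r, SimpleGraph.Walk.cons_isPath_iff, hbc.ne', hab.ne', hac.symm]
    have := hT.path_unique ⟨q.takeUntil a ha, h1path⟩ ⟨r, hrpath⟩
    have hsupp := congrArg (fun P : G.Path c a => (P : G.Walk c a).support) this
    simp only [r, SimpleGraph.Walk.support_cons, SimpleGraph.Walk.support_nil] at hsupp
    apply hb
    rw [hsupp]
    simp
  refine ⟨SimpleGraph.Walk.cons hbc q, ?_⟩
  simp only [SimpleGraph.Walk.support_cons, List.mem_cons]
  rintro (rfl | h)
  · exact hab.ne rfl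
  · exact haq h

lemma branch_disjoint (hT : G.IsAcyclic) {v u u' : V}
    (hvu : G.Adj v u) (hvu' : G.Adj v u') (huu' : u ≠ u') {w : V}
    (h1 : w ∈ Branch G v u) (h2 : w ∈ Branch G v u') : False := by
  classical
  obtain ⟨p, hp⟩ := h1
  obtain ⟨p', hp'⟩ := h2
  have hq : v ∉ p.bypass.support := fun h => hp (p.support_bypass_subset h)
  have hq' : v ∉ p'.bypass.support := fun h => hp' (p'.support_bypass_subset h)
  have P1 : (SimpleGraph.Walk.cons hvu p.bypass).IsPath :=
    (SimpleGraph.Walk.cons_isPath_iff _ _).2 ⟨p.bypass_isPath, hq⟩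
  have P2 : (SimpleGraph.Walk.cons hvu' p'.bypass).IsPath :=
    (SimpleGraph.Walk.cons_isPath_iff _ _).2 ⟨p'.bypass_isPath, hq'⟩
  have heq := hT.path_unique ⟨_, P1⟩ ⟨_, P2⟩
  have hsupp := congrArg (fun P : G.Path v w => (P : G.Walk v w).support) heq
  simp only [SimpleGraph.Walk.support_cons] at hsupp
  rw [SimpleGraph.Walk.support_eq_cons p.bypass, SimpleGraph.Walk.support_eq_cons p'.bypass] at hsupp
  exact huu' (List.head_eq_of_cons_eq (List.tail_eq_of_cons_eq hsupp))

lemma exists_marked_branch {X : Type*} [Finite V] {m : X → V}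
    (h : MarkedStableTree X V G m) :
    ∀ n (v u : V), (Branch G v u).ncard ≤ n → G.Adj v u → ∃ x, m x ∈ Branch G v u := by
  intro n
  induction n with
  | zero =>
    intro v u hle hvu
    exfalso
    have hne : (Branch G v u).Nonempty := ⟨u, mem_branch_self hvu⟩
    have := (Set.ncard_pos (Set.toFinite _)).2 hne
    omega
  | succ n ih =>
    intro v u hle hvu
    by_cases hu : u ∈ Set.range m
    · obtain ⟨x, hx⟩ := hu
      refine ⟨x, ?_⟩
      rw [hx]
      exact mem_branch_self hvu
    · have h3 := h.stable u hu
      have hex : ∃ u' ∈ G.neighborSet u, u' ≠ v := by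
        by_contra hc
        push_neg at hc
        have hsub : G.neighborSet u ⊆ {v} := fun z hz => hc z hz
        have := Set.ncard_le_ncard hsub (Set.toFinite _)
        rw [Set.ncard_singleton] at this
        omega
      obtain ⟨u', hu', hne⟩ := hex
      have hadj : G.Adj u u' := hu'
      have hsub : Branch G u u' ⊆ Branch G v u :=
        branch_subset h.tree.IsAcyclic hvu hadj hne.symm
      have hss : Branch G u u' ⊂ Branch G v u :=
        ⟨hsub, fun hc => not_mem_branch_self u u' (hc (mem_branch_self hvu))⟩
      have hlt : (Branch G u u').ncard < (Branch G v u).ncard :=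
        Set.ncard_lt_ncard hss (Set.toFinite _)
      obtain ⟨x, hx⟩ := ih u u' (by omega) hadj
      exact ⟨x, hsub hx⟩

end Aux

/-- if `[v0, v1, v2]` is a path in a stable tree marked by `X`, then
`B_{v1}(v2) ∩ X` is a strict subset of `B_{v0}(v1) ∩ X`. -/
theorem branch_trace_strict_mono {X V : Type*} [Finite X] [Finite V]
    (G : SimpleGraph V) (m : X → V) (h : MarkedStableTree X V G m)
    (hX : 3 ≤ Nat.card X) (v0 v1 v2 : V)
    (h01 : G.Adj v0 v1) (h12 : G.Adj v1 v2) (h02 : v0 ≠ v2) :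
    {x : X | m x ∈ Branch G v1 v2} ⊂ {x : X | m x ∈ Branch G v0 v1} := by
  have hT := h.tree.IsAcyclic
  constructor
  · intro x hx
    exact branch_subset hT h01 h12 h02 hx
  · -- v1 is internal: it has a neighbor u ∉ {v0, v2}
    intro hcon
    have hmem0 : v0 ∈ G.neighborSet v1 := h01.symm
    have hmem2 : v2 ∈ G.neighborSet v1 := h12
    have hpairsub : ({v0, v2} : Set V) ⊆ G.neighborSet v1 := by
      intro z hz
      rcases hz with rfl | rfl
      · exact hmem0
      · exact hmem2
    have hpair : ({v0, v2} : Set V).ncard = 2 := Set.ncard_pair h02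
    have h2le : 2 ≤ (G.neighborSet v1).ncard := by
      rw [← hpair]
      exact Set.ncard_le_ncard hpairsub (Set.toFinite _)
    have hv1 : v1 ∉ Set.range m := by
      intro hr
      have := (h.leaf_iff v1).2 hr
      omega
    have h3 := h.stable v1 hv1
    have hex : ∃ u ∈ G.neighborSet v1, u ∉ ({v0, v2} : Set V) := by
      by_contra hc
      push_neg at hc
      have hsub : G.neighborSet v1 ⊆ {v0, v2} := fun z hz => hc z hz
      have := Set.ncard_le_ncard hsub (Set.toFinite _)
      omega
    obtain ⟨u, hu, hnotpair⟩ := hex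
    have hadj : G.Adj v1 u := hu
    have hu0 : u ≠ v0 := fun hc => hnotpair (by simp [hc])
    have hu2 : u ≠ v2 := fun hc => hnotpair (by simp [hc])
    obtain ⟨x, hx⟩ := exists_marked_branch h (Branch G v1 u).ncard v1 u le_rfl hadj
    have hxin : x ∈ {x : X | m x ∈ Branch G v0 v1} :=
      branch_subset hT h01 hadj hu0.symm hx
    have hxout : x ∉ {x : X | m x ∈ Branch G v1 v2} := fun hc =>
      branch_disjoint hT hadj h12 hu2 hx hc
    exact hxout (hcon hxin)
end

section
/- Every admissible set of partitions 𝒫 of X arises as ψ(T) for some stable tree T marked by X; concretely, the graph with vertex set 𝒫 ∪ X, with an edge between P1, P2 ∈ 𝒫 whenever there exist blocks B1 ∈ P1 and B2 ∈ P2 with B1 ∪ B2 = X and B1 ∩ B2 = ∅, and with an edge between P0 ∈ 𝒫 and x ∈ X whenever {x} ∈ P0, is a stable tree marked by X whose induced set of branch partitions equals 𝒫. -/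
open SimpleGraph

/-- Admissibility of a set of partitions of `X`. -/
def Admissible {X : Type*} (Ps : Set (Set (Set X))) : Prop :=
  (∀ P ∈ Ps, 3 ≤ P.ncard) ∧
  (∀ P ∈ Ps, ∀ B ∈ P, (∃ x : X, B = {x}) ∨ ∃ P' ∈ Ps, Bᶜ ∈ P') ∧
  (∀ P ∈ Ps, ∀ P' ∈ Ps, P ≠ P' → P ∩ P' = ∅)



def plumbingGraph {X : Type*} (Ps : Set (Set (Set X))) :
    SimpleGraph ({P // P ∈ Ps} ⊕ X) :=
  SimpleGraph.fromRel (fun v w =>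
    match v, w with
    | Sum.inl P1, Sum.inl P2 =>
        ∃ B1 ∈ (P1 : Set (Set X)), ∃ B2 ∈ (P2 : Set (Set X)),
          B1 ∪ B2 = Set.univ ∧ B1 ∩ B2 = ∅
    | Sum.inl P, Sum.inr x => ({x} : Set X) ∈ (P : Set (Set X))
    | Sum.inr _, _ => False)



/-- The partition `P_v^X` of `X` induced by the branches at a vertex `v`. -/
def blockPartition {X V : Type*} (G : SimpleGraph V) (m : X → V) (v : V) : Set (Set X) :=
  {B | ∃ u, G.Adj v u ∧ B = {x : X | m x ∈ Branch G v u}}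

/-- `ψ(T)`: the set of partitions of `X` induced at the internal vertices of `T`. -/
def psi {X V : Type*} (G : SimpleGraph V) (m : X → V) : Set (Set (Set X)) :=
  {P | ∃ v, v ∉ Set.range m ∧ P = blockPartition G m v}

namespace PlumbingAux

variable {X : Type*} {Ps : Set (Set (Set X))}

lemma block_nonempty (hpart : ∀ P ∈ Ps, Setoid.IsPartition P)
    {P B : _} (hP : P ∈ Ps) (hB : B ∈ P) : B.Nonempty := by
  rcases Set.eq_empty_or_nonempty B with rfl | h
  · exact absurd hB (hpart P hP).1
  · exact h

lemma blocks_disjoint (hpart : ∀ P ∈ Ps, Setoid.IsPartition P)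
    {P B C : _} (hP : P ∈ Ps) (hB : B ∈ P) (hC : C ∈ P) (hne : B ≠ C) : B ∩ C = ∅ := by
  by_contra h
  obtain ⟨x, hxB, hxC⟩ := Set.nonempty_iff_ne_empty.2 h
  obtain ⟨b, _, hb⟩ := (hpart P hP).2 x
  exact hne ((hb B ⟨hB, hxB⟩).trans (hb C ⟨hC, hxC⟩).symm)

lemma exists_block (hpart : ∀ P ∈ Ps, Setoid.IsPartition P)
    {P : _} (hP : P ∈ Ps) (x : X) : ∃ B ∈ P, x ∈ B := by
  obtain ⟨b, ⟨hb, hxb⟩, _⟩ := (hpart P hP).2 x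
  exact ⟨b, hb, hxb⟩

lemma no_two_cover (hpart : ∀ P ∈ Ps, Setoid.IsPartition P) (hadm : Admissible Ps)
    {P B C : _} (hP : P ∈ Ps) (hB : B ∈ P) (hC : C ∈ P) (h : B ∪ C = Set.univ) : False := by
  have h3 : 3 ≤ P.ncard := hadm.1 P hP
  have : ∃ D ∈ P, D ≠ B ∧ D ≠ C := by
    by_contra hcon
    push_neg at hcon
    have hsub : P ⊆ {B, C} := by
      intro D hD
      rcases em (D = B) with rfl | hDB
      · exact Set.mem_insert _ _
      · exact Set.mem_insert_of_mem _ (hcon D hD hDB)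
    have := Set.ncard_le_ncard hsub (Set.toFinite _)
    have h2 : ({B, C} : Set (Set X)).ncard ≤ 2 :=
      le_trans (Set.ncard_insert_le _ _) (by simp)
    omega
  obtain ⟨D, hD, hDB, hDC⟩ := this
  obtain ⟨x, hx⟩ := block_nonempty hpart hP hD
  have hxBC : x ∈ B ∪ C := h ▸ Set.mem_univ x
  rcases hxBC with hxB | hxC
  · have := blocks_disjoint hpart hP hD hB hDB
    exact absurd this (by intro hh; exact (Set.eq_empty_iff_forall_notMem.1 hh x) ⟨hx, hxB⟩)
  · have := blocks_disjoint hpart hP hD hC hDC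
    exact absurd this (by intro hh; exact (Set.eq_empty_iff_forall_notMem.1 hh x) ⟨hx, hxC⟩)

lemma eq_of_common_block (hadm : Admissible Ps)
    {P Q B : _} (hP : P ∈ Ps) (hQ : Q ∈ Ps) (hBP : B ∈ P) (hBQ : B ∈ Q) : P = Q := by
  by_contra hne
  have := hadm.2.2 P hP Q hQ hne
  exact (Set.eq_empty_iff_forall_notMem.1 this B) ⟨hBP, hBQ⟩

lemma ne_of_compl (hpart : ∀ P ∈ Ps, Setoid.IsPartition P) (hadm : Admissible Ps)
    {P Q B : _} (hP : P ∈ Ps) (hQ : Q ∈ Ps) (hBP : B ∈ P) (hBQ : Bᶜ ∈ Q) : P ≠ Q := by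
  rintro rfl
  exact no_two_cover hpart hadm hP hBP hBQ (Set.union_compl_self B)

lemma compl_unique (hpart : ∀ P ∈ Ps, Setoid.IsPartition P) (hadm : Admissible Ps)
    {P Q B C : _} (hP : P ∈ Ps) (hQ : Q ∈ Ps) (hBP : B ∈ P) (hBQ : Bᶜ ∈ Q)
    (hCP : C ∈ P) (hCQ : Cᶜ ∈ Q) : B = C := by
  by_contra hne
  have hdisj := blocks_disjoint hpart hP hBP hCP hne
  have hcover : Bᶜ ∪ Cᶜ = Set.univ := by
    rw [← Set.compl_inter, hdisj, Set.compl_empty]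
  exact no_two_cover hpart hadm hQ hBQ hCQ hcover



lemma eq_compl {B C : Set X} (hu : B ∪ C = Set.univ) (hi : B ∩ C = ∅) : C = Bᶜ := by
  ext x
  constructor
  · intro hxC hxB
    exact (Set.eq_empty_iff_forall_notMem.1 hi x) ⟨hxB, hxC⟩
  · intro hxB
    rcases (hu ▸ Set.mem_univ x : x ∈ B ∪ C) with h | h
    · exact absurd h hxB
    · exact h

lemma not_adj_inr_inr {x y : X} : ¬ (plumbingGraph Ps).Adj (Sum.inr x) (Sum.inr y) := by
  intro h
  rw [plumbingGraph, fromRel_adj] at h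
  rcases h.2 with h | h <;> exact h

lemma adj_inl_inr_iff {P : {P // P ∈ Ps}} {x : X} :
    (plumbingGraph Ps).Adj (Sum.inl P) (Sum.inr x) ↔ ({x} : Set X) ∈ (P : Set (Set X)) := by
  rw [plumbingGraph, fromRel_adj]
  constructor
  · rintro ⟨-, h | h⟩
    · exact h
    · exact absurd h id
  · intro h
    exact ⟨by simp, Or.inl h⟩

lemma adj_inr_inl_iff {P : {P // P ∈ Ps}} {x : X} :
    (plumbingGraph Ps).Adj (Sum.inr x) (Sum.inl P) ↔ ({x} : Set X) ∈ (P : Set (Set X)) := by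
  rw [adj_comm]; exact adj_inl_inr_iff

lemma adj_inl_inl_iff (hpart : ∀ P ∈ Ps, Setoid.IsPartition P) (hadm : Admissible Ps)
    {P Q : {P // P ∈ Ps}} :
    (plumbingGraph Ps).Adj (Sum.inl P) (Sum.inl Q) ↔
      ∃ B ∈ (P : Set (Set X)), Bᶜ ∈ (Q : Set (Set X)) := by
  rw [plumbingGraph, fromRel_adj]
  constructor
  · rintro ⟨hne, ⟨B1, hB1, B2, hB2, hu, hi⟩ | ⟨B1, hB1, B2, hB2, hu, hi⟩⟩
    · exact ⟨B1, hB1, (eq_compl hu hi) ▸ hB2⟩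
    · refine ⟨B2, hB2, ?_⟩
      have : B2 = B1ᶜ := eq_compl hu hi
      rw [this, compl_compl]
      exact hB1
  · rintro ⟨B, hBP, hBQ⟩
    refine ⟨?_, Or.inl ⟨B, hBP, Bᶜ, hBQ, Set.union_compl_self B, Set.inter_compl_self B⟩⟩
    intro h
    have hPQ : (P : Set (Set X)) = Q := congrArg Subtype.val (Sum.inl.inj h)
    exact ne_of_compl hpart hadm P.2 Q.2 hBP (hPQ ▸ hBQ) hPQ

/-- The block of `v` in the direction of `u`. -/
noncomputable def D : ({P // P ∈ Ps} ⊕ X) → ({P // P ∈ Ps} ⊕ X) → Set X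
  | Sum.inl P, Sum.inl Q => ⋃₀ {B | B ∈ (P : Set (Set X)) ∧ Bᶜ ∈ (Q : Set (Set X))}
  | Sum.inl _, Sum.inr x => {x}
  | Sum.inr x, _ => {x}ᶜ

lemma D_inl_inl (hpart : ∀ P ∈ Ps, Setoid.IsPartition P) (hadm : Admissible Ps)
    {P Q : {P // P ∈ Ps}} (h : (plumbingGraph Ps).Adj (Sum.inl P) (Sum.inl Q)) :
    D (Sum.inl P) (Sum.inl Q) ∈ (P : Set (Set X)) ∧
      (D (Sum.inl P) (Sum.inl Q))ᶜ ∈ (Q : Set (Set X)) := by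
  obtain ⟨B, hBP, hBQ⟩ := (adj_inl_inl_iff hpart hadm).1 h
  have hset : {C | C ∈ (P : Set (Set X)) ∧ Cᶜ ∈ (Q : Set (Set X))} = {B} := by
    ext C
    simp only [Set.mem_setOf_eq, Set.mem_singleton_iff]
    constructor
    · rintro ⟨hCP, hCQ⟩
      exact (compl_unique hpart hadm P.2 Q.2 hCP hCQ hBP hBQ)
    · rintro rfl; exact ⟨hBP, hBQ⟩
  have : D (Sum.inl P) (Sum.inl Q) = B := by
    have hd : D (Sum.inl P) (Sum.inl Q)
        = ⋃₀ {C | C ∈ (P : Set (Set X)) ∧ Cᶜ ∈ (Q : Set (Set X))} := rfl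
    rw [hd, hset, Set.sUnion_singleton]
  rw [this]; exact ⟨hBP, hBQ⟩

lemma D_mem (hpart : ∀ P ∈ Ps, Setoid.IsPartition P) (hadm : Admissible Ps)
    {P : {P // P ∈ Ps}} {u} (h : (plumbingGraph Ps).Adj (Sum.inl P) u) :
    D (Sum.inl P) u ∈ (P : Set (Set X)) := by
  cases u with
  | inl Q => exact (D_inl_inl hpart hadm h).1
  | inr x => exact adj_inl_inr_iff.1 h

lemma D_symm (hpart : ∀ P ∈ Ps, Setoid.IsPartition P) (hadm : Admissible Ps)
    {v u : {P // P ∈ Ps} ⊕ X} (h : (plumbingGraph Ps).Adj v u) :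
    D u v = (D v u)ᶜ := by
  cases v with
  | inl P =>
    cases u with
    | inl Q =>
      obtain ⟨hm, hc⟩ := D_inl_inl hpart hadm h
      obtain ⟨hm', hc'⟩ := D_inl_inl hpart hadm h.symm
      exact compl_unique hpart hadm Q.2 P.2 hm' hc' hc (by rw [compl_compl]; exact hm)
    | inr x =>
      show ({x} : Set X)ᶜ = _
      have : D (Sum.inl P) (Sum.inr x) = ({x} : Set X) := rfl
      rw [this]
  | inr x =>
    cases u with
    | inl Q =>
      show D (Sum.inl Q) (Sum.inr x) = ({x}ᶜ : Set X)ᶜ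
      rw [compl_compl]; rfl
    | inr y => exact absurd h not_adj_inr_inr


lemma D_step (hpart : ∀ P ∈ Ps, Setoid.IsPartition P) (hadm : Admissible Ps)
    {P Q R : {P // P ∈ Ps}}
    (hab : (plumbingGraph Ps).Adj (Sum.inl P) (Sum.inl Q))
    (hbc : (plumbingGraph Ps).Adj (Sum.inl Q) (Sum.inl R))
    (hac : P ≠ R) :
    D (Sum.inl Q) (Sum.inl R) ⊂ D (Sum.inl P) (Sum.inl Q) := by
  have hba := hab.symm
  have hA : D (Sum.inl Q) (Sum.inl P) ∈ (Q : Set (Set X)) := D_mem hpart hadm hba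
  have hC : D (Sum.inl Q) (Sum.inl R) ∈ (Q : Set (Set X)) := D_mem hpart hadm hbc
  have hAc : (D (Sum.inl Q) (Sum.inl P))ᶜ ∈ (P : Set (Set X)) := (D_inl_inl hpart hadm hba).2
  have hCc : (D (Sum.inl Q) (Sum.inl R))ᶜ ∈ (R : Set (Set X)) := (D_inl_inl hpart hadm hbc).2
  have hne : D (Sum.inl Q) (Sum.inl R) ≠ D (Sum.inl Q) (Sum.inl P) := by
    intro he
    have h2 : (D (Sum.inl Q) (Sum.inl P))ᶜ ∈ (R : Set (Set X)) := he ▸ hCc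
    exact hac (Subtype.ext (eq_of_common_block hadm P.2 R.2 hAc h2))
  have hdisj := blocks_disjoint hpart Q.2 hC hA hne
  have hsub : D (Sum.inl Q) (Sum.inl R) ⊆ (D (Sum.inl Q) (Sum.inl P))ᶜ := by
    intro x hx hx'
    exact (Set.eq_empty_iff_forall_notMem.1 hdisj x) ⟨hx, hx'⟩
  have hsymm : D (Sum.inl P) (Sum.inl Q) = (D (Sum.inl Q) (Sum.inl P))ᶜ :=
    D_symm hpart hadm hba
  rw [hsymm]
  refine Set.ssubset_iff_subset_ne.mpr ⟨hsub, ?_⟩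
  intro he
  exact no_two_cover hpart hadm Q.2 hA hC (by rw [he]; exact Set.union_compl_self _)

lemma chainMain (hpart : ∀ P ∈ Ps, Setoid.IsPartition P) (hadm : Admissible Ps)
    {w u : {P // P ∈ Ps} ⊕ X} (q : (plumbingGraph Ps).Walk u w) :
    q.IsPath → (∀ z ∈ q.support, z.isLeft = true) →
    ∀ a, (plumbingGraph Ps).Adj a u → a ∉ q.support → a.isLeft = true →
    ∀ b, (plumbingGraph Ps).Adj w b → b ∉ q.support → b.isLeft = true →
    (q.Nil → b ≠ a) → D w b ⊂ D a u := by
  induction q with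
  | nil =>
    intro _ hinl a ha hans hal b hb hbns hbl hnil
    obtain ⟨A, rfl⟩ := Sum.isLeft_iff.1 hal
    obtain ⟨Bb, rfl⟩ := Sum.isLeft_iff.1 hbl
    obtain ⟨U, rfl⟩ := Sum.isLeft_iff.1 (hinl _ (Walk.start_mem_support _))
    refine D_step hpart hadm ha hb ?_
    intro hAB
    exact hnil (by simp) (by rw [hAB])
  | cons h q' ih =>
    intro hp hinl a ha hans hal b hb hbns hbl _
    have hp' : q'.IsPath := hp.of_cons
    have hu'ns := ((Walk.cons_isPath_iff h q').1 hp).2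
    have hsupcons : ∀ z ∈ q'.support, z ∈ (Walk.cons h q').support := by
      intro z hzs
      rw [Walk.support_cons]
      exact List.mem_cons_of_mem _ hzs
    have hbns' : b ∉ q'.support := fun hh => hbns (hsupcons _ hh)
    have hbneu : b ≠ _ := fun hbe => hbns (hbe ▸ Walk.start_mem_support (Walk.cons h q'))
    have ih' := ih hp' (fun z hz => hinl z (hsupcons z hz)) _ h hu'ns
      (hinl _ (Walk.start_mem_support (Walk.cons h q'))) b hb hbns' hbl (fun _ => hbneu)
    refine ih'.trans ?_
    obtain ⟨A, rfl⟩ := Sum.isLeft_iff.1 hal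
    obtain ⟨U, hU⟩ := Sum.isLeft_iff.1 (hinl _ (Walk.start_mem_support (Walk.cons h q')))
    obtain ⟨V, hV⟩ := Sum.isLeft_iff.1 (hinl _ (hsupcons _ (Walk.start_mem_support q')))
    rw [hU] at ha
    rw [hU, hV] at h
    rw [hU, hV]
    refine D_step hpart hadm ha h ?_
    intro hAV
    refine hans ?_
    rw [hAV, ← hV]
    exact hsupcons _ (Walk.start_mem_support q')
lemma cycle_support_isLeft (hpart : ∀ P ∈ Ps, Setoid.IsPartition P) (hadm : Admissible Ps)
    {v : {P // P ∈ Ps} ⊕ X} {c : (plumbingGraph Ps).Walk v v} (hc : c.IsCycle) :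
    ∀ z ∈ c.support, z.isLeft = true := by
  intro z hz
  cases z with
  | inl P => rfl
  | inr x =>
    exfalso
    classical
    have hc' : (c.rotate _ hz).IsCycle := hc.rotate hz
    generalize c.rotate _ hz = c' at hc'
    cases c' with
    | nil => exact hc'.ne_nil rfl
    | cons h q =>
      rename_i u
      have h3 : 3 ≤ q.length + 1 := by
        simpa [Walk.length_cons] using hc'.three_le_length
      have hqp : q.IsPath := ((Walk.cons_isCycle_iff q h).1 hc').1
      have hnn : ¬ q.reverse.Nil := by
        rw [Walk.nil_iff_length_eq, Walk.length_reverse]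
        omega
      have hadjw : (plumbingGraph Ps).Adj (Sum.inr x) (q.reverse.getVert 1) :=
        q.reverse.adj_snd hnn
      obtain ⟨P, hxP⟩ : ∃ P : {P // P ∈ Ps},
          u = Sum.inl P ∧ ({x} : Set X) ∈ (P : Set (Set X)) := by
        cases hu : u with
        | inl P => exact ⟨P, rfl, adj_inr_inl_iff.1 (hu ▸ h)⟩
        | inr y => exact absurd (hu ▸ h) not_adj_inr_inr
      obtain ⟨P2, hxP2⟩ : ∃ P2 : {P // P ∈ Ps},
          q.reverse.getVert 1 = Sum.inl P2 ∧ ({x} : Set X) ∈ (P2 : Set (Set X)) := by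
        cases hw : q.reverse.getVert 1 with
        | inl P2 => exact ⟨P2, rfl, adj_inr_inl_iff.1 (hw ▸ hadjw)⟩
        | inr y => exact absurd (hw ▸ hadjw) not_adj_inr_inr
      have hPP : P = P2 := Subtype.ext (eq_of_common_block hadm P.2 P2.2 hxP.2 hxP2.2)
      have heq : q.reverse.getVert 1 = u := by rw [hxP2.1, hxP.1, hPP]
      have ht : ((q.reverse.tail).copy heq rfl).IsPath :=
        (Walk.isPath_copy _ _ _).mpr (hqp.reverse.tail)
      have hnil : (q.reverse.tail).copy heq rfl = Walk.nil :=
        Walk.isPath_iff_eq_nil.1 ht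
      have hlen0 : (q.reverse.tail).length = 0 := by
        have h5 := congrArg Walk.length hnil
        simpa using h5
      have h6 := Walk.length_tail_add_one hnn
      rw [Walk.length_reverse] at h6
      omega

lemma plumbing_acyclic (hpart : ∀ P ∈ Ps, Setoid.IsPartition P) (hadm : Admissible Ps) :
    (plumbingGraph Ps).IsAcyclic := by
  intro v c hc
  have hinl := cycle_support_isLeft hpart hadm hc
  cases c with
  | nil => exact hc.ne_nil rfl
  | cons h q =>
    rename_i u
    have hqp : q.IsPath := ((Walk.cons_isCycle_iff q h).1 hc).1
    have h3 : 3 ≤ q.length + 1 := by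
      simpa [Walk.length_cons] using hc.three_le_length
    have hnn : ¬ q.reverse.Nil := by
      rw [Walk.nil_iff_length_eq, Walk.length_reverse]; omega
    have h2 : (plumbingGraph Ps).Adj v (q.reverse.getVert 1) :=
      q.reverse.adj_snd hnn
    have hrp : q.reverse.IsPath := hqp.reverse
    have hconsEq : Walk.cons (q.reverse.adj_snd hnn) q.reverse.tail = q.reverse :=
      Walk.cons_tail_eq _ hnn
    have hvns : v ∉ q.reverse.tail.support := by
      have hcp : (Walk.cons (q.reverse.adj_snd hnn) q.reverse.tail).IsPath := by
        rw [hconsEq]; exact hrp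
      exact ((Walk.cons_isPath_iff _ _).1 hcp).2
    have hr'p : q.reverse.tail.IsPath := hrp.tail
    have hsupsub : ∀ z ∈ q.reverse.tail.support, z ∈ (Walk.cons h q).support := by
      intro z hzs
      have hzr : z ∈ q.reverse.support := by
        rw [← hconsEq, Walk.support_cons]
        exact List.mem_cons_of_mem _ hzs
      rw [Walk.support_reverse] at hzr
      rw [Walk.support_cons]
      exact List.mem_cons_of_mem _ (List.mem_reverse.1 hzr)
    have hvmem : v ∈ (Walk.cons h q).support := Walk.start_mem_support _
    have hr'nn : ¬ q.reverse.tail.Nil := by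
      rw [Walk.nil_iff_length_eq]
      have h6 := Walk.length_tail_add_one hnn
      rw [Walk.length_reverse] at h6
      omega
    have hchain := chainMain hpart hadm q.reverse.tail hr'p
      (fun z hz => hinl z (hsupsub z hz))
      v h2 hvns (hinl _ hvmem)
      v h.symm hvns (hinl _ hvmem)
      (fun hh => absurd hh hr'nn)
    -- hchain : D u v ⊂ D v (q.reverse.getVert 1)
    have hw'neu : q.reverse.getVert 1 ≠ u := by
      intro he
      have ht : ((q.reverse.tail).copy he rfl).IsPath :=
        (Walk.isPath_copy _ _ _).mpr hr'p
      have hnil := Walk.isPath_iff_eq_nil.1 ht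
      have hlen0 : (q.reverse.tail).length = 0 := by
        have h5 := congrArg Walk.length hnil
        simpa using h5
      exact hr'nn (Walk.nil_iff_length_eq.2 hlen0)
    obtain ⟨U, hU⟩ := Sum.isLeft_iff.1 (hinl u (by
      rw [Walk.support_cons]; exact List.mem_cons_of_mem _ (Walk.start_mem_support _)))
    obtain ⟨W, hW⟩ := Sum.isLeft_iff.1 (hinl _ (hsupsub _ (Walk.start_mem_support _)))
    obtain ⟨Vv, hV⟩ := Sum.isLeft_iff.1 (hinl v hvmem)
    subst hU
    subst hV
    change q.reverse.getVert 1 = Sum.inl W at hW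
    change D (Sum.inl U) (Sum.inl Vv) ⊂ D (Sum.inl Vv) (q.reverse.getVert 1) at hchain
    rw [hW] at hchain h2 hw'neu
    have hWU : W ≠ U := fun he => hw'neu (congrArg Sum.inl he)
    have hstep : D (Sum.inl Vv) (Sum.inl U) ⊂ D (Sum.inl W) (Sum.inl Vv) :=
      D_step hpart hadm h2.symm h hWU
    have hsy1 : D (Sum.inl U) (Sum.inl Vv) = (D (Sum.inl Vv) (Sum.inl U))ᶜ :=
      D_symm hpart hadm h
    have hsy2 : D (Sum.inl Vv) (Sum.inl W) = (D (Sum.inl W) (Sum.inl Vv))ᶜ :=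
      D_symm hpart hadm h2.symm
    rw [hsy1, hsy2] at hchain
    have hrev : D (Sum.inl W) (Sum.inl Vv) ⊂ D (Sum.inl Vv) (Sum.inl U) := by
      refine Set.ssubset_iff_subset_ne.mpr ⟨Set.compl_subset_compl.mp hchain.1, ?_⟩
      intro he
      exact hchain.2 (by rw [he])
    exact ssubset_irrefl _ (hstep.trans hrev)
lemma reach_aux (hpart : ∀ P ∈ Ps, Setoid.IsPartition P) (hadm : Admissible Ps) [Finite X] :
    ∀ (n : ℕ) (P : Set (Set X)) (hP : P ∈ Ps) (B : Set X), B ∈ P → ∀ x : X,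
      x ∈ B → B.ncard ≤ n →
      ∃ p : (plumbingGraph Ps).Walk (Sum.inl ⟨P, hP⟩) (Sum.inr x),
        ∀ z ∈ p.support, z = Sum.inl ⟨P, hP⟩ ∨
          (∃ R, ∃ hR : R ∈ Ps, z = Sum.inl ⟨R, hR⟩ ∧ ∃ C ∈ R, C ⊂ B) ∨
          (∃ y ∈ B, z = Sum.inr y) := by
  intro n
  induction n with
  | zero =>
    intro P hP B hB x hx hn
    exfalso
    have : B = ∅ := (Set.ncard_eq_zero (Set.toFinite B)).1 (Nat.le_zero.1 hn)
    exact (this ▸ hx : x ∈ (∅ : Set X))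
  | succ n ih =>
    intro P hP B hB x hx hn
    rcases hadm.2.1 P hP B hB with ⟨y, rfl⟩ | ⟨P', hP', hBc⟩
    · have hxy : x = y := hx
      subst hxy
      have hadj : (plumbingGraph Ps).Adj (Sum.inl ⟨P, hP⟩) (Sum.inr x) :=
        adj_inl_inr_iff.2 hB
      refine ⟨Walk.cons hadj Walk.nil, ?_⟩
      intro z hzs
      rw [Walk.support_cons, Walk.support_nil] at hzs
      rcases List.mem_cons.1 hzs with rfl | hz
      · left; rfl
      · right; right
        exact ⟨x, rfl, (List.mem_singleton.1 hz)⟩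
    · obtain ⟨B', hB', hxB'⟩ := exists_block hpart hP' x
      have hneC : B' ≠ Bᶜ := fun he => ((he ▸ hxB' : x ∈ Bᶜ)) hx
      have hsub : B' ⊆ B := by
        intro a ha
        by_contra hac
        exact (Set.eq_empty_iff_forall_notMem.1
          (blocks_disjoint hpart hP' hB' hBc hneC) a) ⟨ha, hac⟩
      have hneB : B' ≠ B := by
        rintro rfl
        have hPQ : P = P' := eq_of_common_block hadm hP hP' hB hB'
        exact no_two_cover hpart hadm hP hB (by rw [hPQ]; exact hBc)
          (Set.union_compl_self B')
      have hss : B' ⊂ B := Set.ssubset_iff_subset_ne.mpr ⟨hsub, hneB⟩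
      have hcard : B'.ncard ≤ n := by
        have := Set.ncard_lt_ncard hss (Set.toFinite B)
        omega
      obtain ⟨p', hp'⟩ := ih P' hP' B' hB' x hxB' hcard
      have hadj : (plumbingGraph Ps).Adj (Sum.inl ⟨P, hP⟩) (Sum.inl ⟨P', hP'⟩) :=
        (adj_inl_inl_iff hpart hadm).2 ⟨B, hB, hBc⟩
      refine ⟨Walk.cons hadj p', ?_⟩
      intro z hzs
      rw [Walk.support_cons] at hzs
      rcases List.mem_cons.1 hzs with rfl | hz
      · left; rfl
      · rcases hp' z hz with rfl | ⟨R, hR, hzR, C, hC, hCs⟩ | ⟨y, hy, rfl⟩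
        · right; left; exact ⟨P', hP', rfl, B', hB', hss⟩
        · right; left; exact ⟨R, hR, hzR, C, hC, hCs.trans hss⟩
        · right; right; exact ⟨y, hsub hy, rfl⟩

lemma exists_singleton (hpart : ∀ P ∈ Ps, Setoid.IsPartition P) (hadm : Admissible Ps)
    [Finite X] (hne : Ps.Nonempty) (x : X) : ∃ P ∈ Ps, ({x} : Set X) ∈ P := by
  obtain ⟨P0, hP0⟩ := hne
  obtain ⟨B0, hB0, hxB0⟩ := exists_block hpart hP0 x
  have aux : ∀ (n : ℕ) (P : Set (Set X)), P ∈ Ps → ∀ B ∈ P, x ∈ B → B.ncard ≤ n →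
      ∃ Q ∈ Ps, ({x} : Set X) ∈ Q := by
    intro n
    induction n with
    | zero =>
      intro P hP B hB hx hn
      exfalso
      have : B = ∅ := (Set.ncard_eq_zero (Set.toFinite B)).1 (Nat.le_zero.1 hn)
      exact (this ▸ hx : x ∈ (∅ : Set X))
    | succ n ih =>
      intro P hP B hB hx hn
      rcases hadm.2.1 P hP B hB with ⟨y, rfl⟩ | ⟨P', hP', hBc⟩
      · have hxy : x = y := hx
        subst hxy
        exact ⟨P, hP, hB⟩
      · obtain ⟨B', hB', hxB'⟩ := exists_block hpart hP' x
        have hneC : B' ≠ Bᶜ := fun he => ((he ▸ hxB' : x ∈ Bᶜ)) hx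
        have hsub : B' ⊆ B := by
          intro a ha
          by_contra hac
          exact (Set.eq_empty_iff_forall_notMem.1
            (blocks_disjoint hpart hP' hB' hBc hneC) a) ⟨ha, hac⟩
        have hneB : B' ≠ B := by
          rintro rfl
          have hPQ : P = P' := eq_of_common_block hadm hP hP' hB hB'
          exact no_two_cover hpart hadm hP hB (by rw [hPQ]; exact hBc)
            (Set.union_compl_self B')
        have hcard : B'.ncard ≤ n := by
          have := Set.ncard_lt_ncard (Set.ssubset_iff_subset_ne.mpr ⟨hsub, hneB⟩)
            (Set.toFinite B)
          omega
        exact ih P' hP' B' hB' hxB' hcard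
  exact aux B0.ncard P0 hP0 B0 hB0 hxB0 le_rfl

lemma adj_inr_elim {x : X} {z : {P // P ∈ Ps} ⊕ X}
    (h : (plumbingGraph Ps).Adj (Sum.inr x) z) :
    ∃ R : {P // P ∈ Ps}, z = Sum.inl R ∧ ({x} : Set X) ∈ (R : Set (Set X)) := by
  cases z with
  | inl R => exact ⟨R, rfl, adj_inr_inl_iff.1 h⟩
  | inr y => exact absurd h not_adj_inr_inr

lemma neighborSet_inr (hpart : ∀ P ∈ Ps, Setoid.IsPartition P) (hadm : Admissible Ps)
    [Finite X] (hne : Ps.Nonempty) (x : X) :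
    ∃ w, (plumbingGraph Ps).neighborSet (Sum.inr x) = {w} := by
  obtain ⟨P, hP, hxP⟩ := exists_singleton hpart hadm hne x
  refine ⟨Sum.inl ⟨P, hP⟩, ?_⟩
  ext z
  simp only [mem_neighborSet, Set.mem_singleton_iff]
  constructor
  · intro h
    obtain ⟨R, rfl, hxR⟩ := adj_inr_elim h
    exact congrArg Sum.inl (Subtype.ext (eq_of_common_block hadm R.2 hP hxR hxP))
  · rintro rfl
    exact adj_inr_inl_iff.2 hxP

lemma exists_neighbor (hpart : ∀ P ∈ Ps, Setoid.IsPartition P) (hadm : Admissible Ps)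
    {Q : {P // P ∈ Ps}} {B : Set X} (hB : B ∈ (Q : Set (Set X))) :
    ∃ u, (plumbingGraph Ps).Adj (Sum.inl Q) u ∧ D (Sum.inl Q) u = B := by
  rcases hadm.2.1 Q.1 Q.2 B hB with ⟨x, rfl⟩ | ⟨P', hP', hBc⟩
  · exact ⟨Sum.inr x, adj_inl_inr_iff.2 hB, rfl⟩
  · have hadj : (plumbingGraph Ps).Adj (Sum.inl Q) (Sum.inl ⟨P', hP'⟩) :=
      (adj_inl_inl_iff hpart hadm).2 ⟨B, hB, hBc⟩
    refine ⟨Sum.inl ⟨P', hP'⟩, hadj, ?_⟩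
    obtain ⟨hm, hc⟩ := D_inl_inl hpart hadm hadj
    exact compl_unique hpart hadm Q.2 hP' hm hc hB hBc

lemma three_le_nbhd (hpart : ∀ P ∈ Ps, Setoid.IsPartition P) (hadm : Admissible Ps)
    [Finite X] (Q : {P // P ∈ Ps}) :
    3 ≤ ((plumbingGraph Ps).neighborSet (Sum.inl Q)).ncard := by
  classical
  have hNe : Nonempty ({P // P ∈ Ps} ⊕ X) := ⟨Sum.inl Q⟩
  set f : Set X → ({P // P ∈ Ps} ⊕ X) := fun B =>
    Classical.epsilon (fun u => (plumbingGraph Ps).Adj (Sum.inl Q) u ∧ D (Sum.inl Q) u = B)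
    with hfdef
  have hf : ∀ B ∈ (Q : Set (Set X)),
      (plumbingGraph Ps).Adj (Sum.inl Q) (f B) ∧ D (Sum.inl Q) (f B) = B := fun B hB =>
    Classical.epsilon_spec (exists_neighbor hpart hadm hB)
  have hinj : Set.InjOn f (Q : Set (Set X)) := by
    intro B1 h1 B2 h2 he
    rw [← (hf B1 h1).2, ← (hf B2 h2).2, he]
  have hsub : f '' (Q : Set (Set X)) ⊆ (plumbingGraph Ps).neighborSet (Sum.inl Q) := by
    rintro z ⟨B, hB, rfl⟩
    exact (hf B hB).1
  calc 3 ≤ (Q : Set (Set X)).ncard := hadm.1 Q.1 Q.2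
    _ = (f '' (Q : Set (Set X))).ncard := (Set.ncard_image_of_injOn hinj).symm
    _ ≤ _ := Set.ncard_le_ncard hsub (Set.toFinite _)

lemma reach_inl_inr (hpart : ∀ P ∈ Ps, Setoid.IsPartition P) (hadm : Admissible Ps)
    [Finite X] (P : Set (Set X)) (hP : P ∈ Ps) (x : X) :
    (plumbingGraph Ps).Reachable (Sum.inl ⟨P, hP⟩) (Sum.inr x) := by
  obtain ⟨B, hB, hxB⟩ := exists_block hpart hP x
  obtain ⟨p, -⟩ := reach_aux hpart hadm B.ncard P hP B hB x hxB le_rfl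
  exact ⟨p⟩

lemma plumbing_connected (hpart : ∀ P ∈ Ps, Setoid.IsPartition P) (hadm : Admissible Ps)
    [Finite X] (hne : Ps.Nonempty) (hX : Nonempty X) :
    (plumbingGraph Ps).Connected := by
  rw [connected_iff]
  refine ⟨?_, ⟨Sum.inr hX.some⟩⟩
  have key : ∀ v : {P // P ∈ Ps} ⊕ X,
      ∃ x : X, (plumbingGraph Ps).Reachable v (Sum.inr x) := by
    intro v
    cases v with
    | inl P => exact ⟨hX.some, reach_inl_inr hpart hadm P.1 P.2 hX.some⟩
    | inr x => exact ⟨x, Reachable.refl _⟩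
  intro v w
  obtain ⟨x, hvx⟩ := key v
  obtain ⟨y, hwy⟩ := key w
  obtain ⟨P, hP, hxP⟩ := exists_singleton hpart hadm hne x
  have h1 : (plumbingGraph Ps).Reachable (Sum.inr x) (Sum.inl ⟨P, hP⟩) :=
    (adj_inr_inl_iff.2 hxP).reachable
  have h2 := reach_inl_inr hpart hadm P hP y
  exact hvx.trans ((h1.trans h2).trans hwy.symm)
lemma branch_disjoint_gen {V : Type*} {G : SimpleGraph V} (htree : G.IsTree) {v u u' : V}
    (hu : G.Adj v u) (hu' : G.Adj v u') (hne : u ≠ u') :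
    Branch G v u ∩ Branch G v u' = ∅ := by
  classical
  rw [Set.eq_empty_iff_forall_notMem]
  rintro w ⟨⟨p, hp⟩, ⟨p', hp'⟩⟩
  have h1 : (Walk.cons hu p.bypass).IsPath :=
    (Walk.bypass_isPath p).cons (fun hv => hp (Walk.support_bypass_subset p hv))
  have h2 : (Walk.cons hu' p'.bypass).IsPath :=
    (Walk.bypass_isPath p').cons (fun hv => hp' (Walk.support_bypass_subset p' hv))
  have heq : Walk.cons hu p.bypass = Walk.cons hu' p'.bypass :=
    (htree.existsUnique_path v w).unique h1 h2
  have huu : u = u' := by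
    have g1 : (Walk.cons hu p.bypass).getVert 1 = u := Walk.snd_cons _ hu
    have g2 : (Walk.cons hu' p'.bypass).getVert 1 = u' := Walk.snd_cons _ hu'
    rw [← g1, ← g2, heq]
  exact hne huu

lemma sub_block (hpart : ∀ P ∈ Ps, Setoid.IsPartition P) (hadm : Admissible Ps)
    {P P' : Set (Set X)} {B : Set X} (hP : P ∈ Ps) (hP' : P' ∈ Ps) (hB : B ∈ P)
    (hBc : Bᶜ ∈ P') {x : X} (hx : x ∈ B) : ∃ B' ∈ P', x ∈ B' ∧ B' ⊂ B := by
  obtain ⟨B', hB', hxB'⟩ := exists_block hpart hP' x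
  have hneC : B' ≠ Bᶜ := fun he => ((he ▸ hxB' : x ∈ Bᶜ)) hx
  have hsub : B' ⊆ B := by
    intro a ha
    by_contra hac
    exact (Set.eq_empty_iff_forall_notMem.1
      (blocks_disjoint hpart hP' hB' hBc hneC) a) ⟨ha, hac⟩
  have hneB : B' ≠ B := by
    rintro rfl
    have hPQ : P = P' := eq_of_common_block hadm hP hP' hB hB'
    exact no_two_cover hpart hadm hP hB (by rw [hPQ]; exact hBc)
      (Set.union_compl_self B')
  exact ⟨B', hB', hxB', Set.ssubset_iff_subset_ne.mpr ⟨hsub, hneB⟩⟩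

lemma marks_branch_eq (hpart : ∀ P ∈ Ps, Setoid.IsPartition P) (hadm : Admissible Ps)
    [Finite X] (htree : (plumbingGraph Ps).IsTree) (Q : {P // P ∈ Ps})
    {u : {P // P ∈ Ps} ⊕ X} (hu : (plumbingGraph Ps).Adj (Sum.inl Q) u) :
    {x : X | Sum.inr x ∈ Branch (plumbingGraph Ps) (Sum.inl Q) u} = D (Sum.inl Q) u := by
  have hsub : ∀ u', (plumbingGraph Ps).Adj (Sum.inl Q) u' →
      ∀ x ∈ D (Sum.inl Q) u', Sum.inr x ∈ Branch (plumbingGraph Ps) (Sum.inl Q) u' := by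
    intro u' hu' x hx
    cases u' with
    | inr y =>
      have hdy : D (Sum.inl Q) (Sum.inr y) = {y} := rfl
      rw [hdy] at hx
      have hxy : x = y := hx
      subst hxy
      exact ⟨Walk.nil, by simp⟩
    | inl Q' =>
      obtain ⟨hm, hc⟩ := D_inl_inl hpart hadm hu'
      obtain ⟨B', hB', hxB', hss⟩ := sub_block hpart hadm Q.2 Q'.2 hm hc hx
      obtain ⟨p, hp⟩ := reach_aux hpart hadm B'.ncard Q'.1 Q'.2 B' hB' x hxB' le_rfl
      refine ⟨p, ?_⟩
      intro hmem
      rcases hp _ hmem with he | ⟨R, hR, he, C, hC, hCs⟩ | ⟨y, _, he⟩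
      · have hQQ : Q = Q' := by
          have := Sum.inl.inj he
          exact this
        have hcoe : (Q' : Set (Set X)) = (Q : Set (Set X)) := by rw [hQQ]
        have hc' : (D (Sum.inl Q) (Sum.inl Q'))ᶜ ∈ (Q : Set (Set X)) := hcoe ▸ hc
        exact no_two_cover hpart hadm Q.2 hm hc' (Set.union_compl_self _)
      · have hRQ : (⟨R, hR⟩ : {P // P ∈ Ps}) = Q := (Sum.inl.inj he).symm
        have hCQ : C ∈ (Q : Set (Set X)) := by rw [← hRQ]; exact hC
        have hCB : C ⊂ D (Sum.inl Q) (Sum.inl Q') := hCs.trans hss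
        have hCne : C ≠ D (Sum.inl Q) (Sum.inl Q') := hCB.ne
        have hdisj := blocks_disjoint hpart Q.2 hCQ hm hCne
        obtain ⟨a, ha⟩ := block_nonempty hpart Q.2 hCQ
        exact (Set.eq_empty_iff_forall_notMem.1 hdisj a) ⟨ha, hCB.1 ha⟩
      · exact (Sum.inl_ne_inr he)
  ext x
  simp only [Set.mem_setOf_eq]
  constructor
  · intro hx
    obtain ⟨B0, hB0, hxB0⟩ := exists_block hpart Q.2 x
    obtain ⟨u0, hu0, hDu0⟩ := exists_neighbor hpart hadm hB0
    by_cases he : u0 = u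
    · subst he
      rw [hDu0]
      exact hxB0
    · exfalso
      have hx0 : Sum.inr x ∈ Branch (plumbingGraph Ps) (Sum.inl Q) u0 :=
        hsub u0 hu0 x (by rw [hDu0]; exact hxB0)
      exact (Set.eq_empty_iff_forall_notMem.1
        (branch_disjoint_gen htree hu0 hu he) (Sum.inr x)) ⟨hx0, hx⟩
  · intro hx
    exact hsub u hu x hx

lemma blockPartition_eq (hpart : ∀ P ∈ Ps, Setoid.IsPartition P) (hadm : Admissible Ps)
    [Finite X] (htree : (plumbingGraph Ps).IsTree) (Q : {P // P ∈ Ps}) :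
    blockPartition (plumbingGraph Ps) Sum.inr (Sum.inl Q) = (Q : Set (Set X)) := by
  ext B
  constructor
  · rintro ⟨u, hu, rfl⟩
    rw [marks_branch_eq hpart hadm htree Q hu]
    exact D_mem hpart hadm hu
  · intro hB
    obtain ⟨u, hu, hD⟩ := exists_neighbor hpart hadm hB
    exact ⟨u, hu, by rw [marks_branch_eq hpart hadm htree Q hu, hD]⟩

end PlumbingAux

open PlumbingAux in
/-- every (nonempty) admissible set of partitions `Ps` of `X`, all of whose
members are genuine partitions of `X`, arises as `ψ(T)` for a stable tree `T` marked by
`X`; concretely, the plumbing graph on `Ps ⊕ X` is a stable tree marked by `X` (via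
`Sum.inr`) whose induced set of branch partitions equals `Ps`. -/
theorem admissible_is_realized {X : Type*} [Finite X] (hX : 3 ≤ Nat.card X)
    (Ps : Set (Set (Set X))) (hne : Ps.Nonempty)
    (hpart : ∀ P ∈ Ps, Setoid.IsPartition P) (hadm : Admissible Ps) :
    MarkedStableTree X ({P // P ∈ Ps} ⊕ X) (plumbingGraph Ps) Sum.inr ∧
    psi (plumbingGraph Ps) (Sum.inr : X → {P // P ∈ Ps} ⊕ X) = Ps := by
  classical
  have hXne : Nonempty X := by
    have h0 : 0 < Nat.card X := by omega
    exact (Nat.card_pos_iff.mp h0).1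
  have hconn := plumbing_connected hpart hadm hne hXne
  have hacyc := plumbing_acyclic hpart hadm
  have htree : (plumbingGraph Ps).IsTree := ⟨hconn, hacyc⟩
  have hleaf : ∀ v, ((plumbingGraph Ps).neighborSet v).ncard = 1 ↔
      v ∈ Set.range (Sum.inr : X → {P // P ∈ Ps} ⊕ X) := by
    intro v
    cases v with
    | inl Q =>
      constructor
      · intro h1
        have h3 := three_le_nbhd hpart hadm Q
        omega
      · rintro ⟨x, hx⟩
        exact absurd hx (Sum.inr_ne_inl)
    | inr x =>
      constructor
      · intro _
        exact ⟨x, rfl⟩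
      · intro _
        obtain ⟨w, hw⟩ := neighborSet_inr hpart hadm hne x
        rw [hw]
        exact Set.ncard_singleton w
  have hstable : ∀ v, v ∉ Set.range (Sum.inr : X → {P // P ∈ Ps} ⊕ X) →
      3 ≤ ((plumbingGraph Ps).neighborSet v).ncard := by
    intro v hv
    cases v with
    | inl Q => exact three_le_nbhd hpart hadm Q
    | inr x => exact absurd ⟨x, rfl⟩ hv
  refine ⟨⟨htree, Sum.inr_injective, hleaf, hstable⟩, ?_⟩
  ext P
  simp only [psi, Set.mem_setOf_eq]
  constructor
  · rintro ⟨v, hv, rfl⟩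
    cases v with
    | inl Q =>
      rw [blockPartition_eq hpart hadm htree Q]
      exact Q.2
    | inr x => exact absurd ⟨x, rfl⟩ hv
  · intro hP
    refine ⟨Sum.inl ⟨P, hP⟩, ?_, (blockPartition_eq hpart hadm htree ⟨P, hP⟩).symm⟩
    rintro ⟨x, hx⟩
    exact Sum.inr_ne_inl hx
end

section
/- In the graph T constructed from an admissible set of partitions 𝒫 of X (vertices 𝒫 ∪ X, with edges as in the plumbing construction), for every x ∈ X every vertex v1 ≠ x can be connected to x by a unique path; moreover, if the first edge of this path is {P1, P2} with P1, P2 ∈ 𝒫, then the block of P1 in the direction of the path contains x. -/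
open SimpleGraph

section Aux

variable {X : Type*} {Ps : Set (Set (Set X))}

/-- set complement characterization -/
lemma pg_compl_of {B1 B2 : Set X} (hu : B1 ∪ B2 = Set.univ) (hi : B1 ∩ B2 = ∅) :
    B2 = B1ᶜ := by
  ext a
  simp only [Set.mem_compl_iff]
  constructor
  · intro h2 h1
    exact Set.notMem_empty a (hi ▸ ⟨h1, h2⟩)
  · intro h1
    have : a ∈ B1 ∪ B2 := hu ▸ Set.mem_univ a
    rcases this with h | h
    · exact absurd h h1
    · exact h

lemma pg_adj_inl_inl {P1 P2 : {P // P ∈ Ps}}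
    (h : (plumbingGraph Ps).Adj (Sum.inl P1) (Sum.inl P2)) :
    P1 ≠ P2 ∧ ∃ B1 ∈ (P1 : Set (Set X)), ∃ B2 ∈ (P2 : Set (Set X)),
      B1 ∪ B2 = Set.univ ∧ B1 ∩ B2 = ∅ := by
  rw [plumbingGraph, fromRel_adj] at h
  obtain ⟨hne, h | h⟩ := h
  · exact ⟨fun e => hne (by rw [e]), h⟩
  · obtain ⟨B1, h1, B2, h2, hu, hi⟩ := h
    exact ⟨fun e => hne (by rw [e]), B2, h2, B1, h1, by rwa [Set.union_comm],
      by rwa [Set.inter_comm]⟩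

lemma pg_adj_inl_inr {P : {P // P ∈ Ps}} {y : X}
    (h : (plumbingGraph Ps).Adj (Sum.inl P) (Sum.inr y)) :
    ({y} : Set X) ∈ (P : Set (Set X)) := by
  rw [plumbingGraph, fromRel_adj] at h
  obtain ⟨hne, h | h⟩ := h
  · exact h
  · exact h.elim

lemma pg_adj_inr {y : X} {w : {P // P ∈ Ps} ⊕ X}
    (h : (plumbingGraph Ps).Adj (Sum.inr y) w) :
    ∃ Q : {P // P ∈ Ps}, w = Sum.inl Q ∧ ({y} : Set X) ∈ (Q : Set (Set X)) := by
  rw [plumbingGraph, fromRel_adj] at h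
  obtain ⟨hne, h | h⟩ := h
  · exact h.elim
  · match w, h with
    | Sum.inl Q, h => exact ⟨Q, rfl, h⟩

lemma pg_adj_mk_ll {P P' : {P // P ∈ Ps}} (hne : P ≠ P') {B : Set X}
    (hB : B ∈ (P : Set (Set X))) (hB' : Bᶜ ∈ (P' : Set (Set X))) :
    (plumbingGraph Ps).Adj (Sum.inl P) (Sum.inl P') := by
  rw [plumbingGraph, fromRel_adj]
  exact ⟨fun e => hne (Sum.inl_injective e),
    Or.inl ⟨B, hB, Bᶜ, hB', Set.union_compl_self B, Set.inter_compl_self B⟩⟩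

lemma pg_adj_mk_lr {P : {P // P ∈ Ps}} {y : X} (h : ({y} : Set X) ∈ (P : Set (Set X))) :
    (plumbingGraph Ps).Adj (Sum.inl P) (Sum.inr y) := by
  rw [plumbingGraph, fromRel_adj]
  exact ⟨by simp, Or.inl h⟩

lemma pg_adj_mk_rl {P : {P // P ∈ Ps}} {y : X} (h : ({y} : Set X) ∈ (P : Set (Set X))) :
    (plumbingGraph Ps).Adj (Sum.inr y) (Sum.inl P) := by
  rw [plumbingGraph, fromRel_adj]
  exact ⟨by simp, Or.inr h⟩

lemma pg_blk_unique {P : Set (Set X)} (hP : Setoid.IsPartition P) {B C : Set X} {a : X}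
    (hB : B ∈ P) (hC : C ∈ P) (ha : a ∈ B) (hb : a ∈ C) : B = C :=
  ExistsUnique.unique (hP.2 a) ⟨hB, ha⟩ ⟨hC, hb⟩

lemma pg_shared_block (hadm : Admissible Ps) {P Q : {P // P ∈ Ps}} {B : Set X}
    (hB : B ∈ (P : Set (Set X))) (hB' : B ∈ (Q : Set (Set X))) : P = Q := by
  by_contra hne
  have h := hadm.2.2 P.1 P.2 Q.1 Q.2 (fun e => hne (Subtype.ext e))
  exact Set.notMem_empty B (h ▸ ⟨hB, hB'⟩)

variable [Finite X]

lemma pg_two_blocks {P : Set (Set X)} (hP : Setoid.IsPartition P) (h3 : 3 ≤ P.ncard)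
    {B : Set X} (hB : B ∈ P) (hB' : Bᶜ ∈ P) : False := by
  have hsub : P ⊆ {B, Bᶜ} := by
    intro C hC
    obtain ⟨a, ha⟩ := Set.nonempty_iff_ne_empty.2 (fun e => hP.1 (e ▸ hC))
    by_cases haB : a ∈ B
    · exact Or.inl (pg_blk_unique hP hC hB ha haB)
    · exact Or.inr (pg_blk_unique hP hC hB' ha haB)
  have h2 : P.ncard ≤ 2 := by
    refine le_trans (Set.ncard_le_ncard hsub (Set.toFinite _)) ?_
    refine le_trans (Set.ncard_insert_le _ _) ?_
    simp [Set.ncard_singleton]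
  omega

lemma pg_no_compl_singleton {P : Set (Set X)} (hP : Setoid.IsPartition P)
    (h3 : 3 ≤ P.ncard) {a : X} (ha : ({a} : Set X)ᶜ ∈ P) : False := by
  obtain ⟨C, ⟨hC, haC⟩, -⟩ := hP.2 a
  have hCa : C = {a} := by
    apply Set.eq_singleton_iff_unique_mem.2
    refine ⟨haC, fun c hc => ?_⟩
    by_contra hca
    have : c ∈ ({a} : Set X)ᶜ := by simpa using hca
    exact absurd (pg_blk_unique hP hC ha hc this ▸ haC) (by simp)
  exact pg_two_blocks hP h3 (hCa ▸ hC) ha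

end Aux
section Main

open SimpleGraph Walk

variable {X : Type*} [Finite X] {Ps : Set (Set (Set X))}

lemma pg_forced (hpart : ∀ P ∈ Ps, Setoid.IsPartition P) (hadm : Admissible Ps) (x : X) :
    ∀ n : ℕ, ∀ (P : {P // P ∈ Ps}) (u : {P // P ∈ Ps} ⊕ X)
      (h : (plumbingGraph Ps).Adj (Sum.inl P) u)
      (t : (plumbingGraph Ps).Walk u (Sum.inr x)),
      (Walk.cons h t).IsPath → t.length ≤ n →
      (∀ z, u = Sum.inr z → z = x) ∧
      (∀ (P' : {P // P ∈ Ps}) (B1 B2 : Set X), u = Sum.inl P' → B1 ∈ P.1 → B2 ∈ P'.1 →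
        B1 ∪ B2 = Set.univ → B1 ∩ B2 = ∅ → x ∈ B1) := by
  intro n
  induction n with
  | zero =>
    intro P u h t hp hl
    have h0 : t.length = 0 := Nat.le_zero.1 hl
    have hu : u = Sum.inr x := by
      cases t with
      | nil => rfl
      | cons h' t' => simp [Walk.length_cons] at h0
    subst hu
    refine ⟨fun z hz => (Sum.inr_injective hz).symm, fun P' B1 B2 hu' => ?_⟩
    exact absurd hu' (by simp)
  | succ n ih =>
    intro P u h t hp hl
    constructor
    · rintro z rfl
      by_contra hzx
      obtain ⟨u2, h2, t2, rfl⟩ :=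
        Walk.exists_eq_cons_of_ne (fun e => hzx (Sum.inr_injective e)) t
      obtain ⟨Q, rfl, hQ⟩ := pg_adj_inr h2
      have hzP : ({z} : Set X) ∈ P.1 := pg_adj_inl_inr h
      have hPnotin : Sum.inl P ∉ (Walk.cons h2 t2).support :=
        ((Walk.cons_isPath_iff _ _).1 hp).2
      have : Sum.inl Q ∈ (Walk.cons h2 t2).support := by
        rw [Walk.support_cons]
        exact List.mem_cons_of_mem _ t2.start_mem_support
      have hPQ : P = Q := pg_shared_block hadm hzP hQ
      exact hPnotin (hPQ ▸ this)
    · rintro P' B1 B2 rfl hB1 hB2 hun hin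
      by_contra hx1
      have hxB2 : x ∈ B2 := by
        have : x ∈ B1 ∪ B2 := hun ▸ Set.mem_univ x
        rcases this with h' | h'
        · exact absurd h' hx1
        · exact h'
      obtain ⟨u2, h2, t2, rfl⟩ := Walk.exists_eq_cons_of_ne (by simp) t
      have hp2 : (Walk.cons h2 t2).IsPath := ((Walk.cons_isPath_iff _ _).1 hp).1
      have hl2 : t2.length ≤ n := by
        simp only [Walk.length_cons] at hl
        omega
      have IH := ih P' u2 h2 t2 hp2 hl2
      rcases u2 with P'' | z
      · obtain ⟨hne2, C1, hC1, C2, hC2, hcu, hci⟩ := pg_adj_inl_inl h2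
        have hxC1 : x ∈ C1 := IH.2 P'' C1 C2 rfl hC1 hC2 hcu hci
        have hC1B2 : C1 = B2 := pg_blk_unique (hpart P'.1 P'.2) hC1 hB2 hxC1 hxB2
        have hC2B1 : C2 = B1 := by
          have hswap : B1 = B2ᶜ :=
            pg_compl_of (by rwa [Set.union_comm] at hun) (by rwa [Set.inter_comm] at hin)
          rw [pg_compl_of hcu hci, hC1B2, ← hswap]
        have hPP'' : P ≠ P'' := by
          rintro rfl
          have hPnotin : Sum.inl P ∉ (Walk.cons h2 t2).support :=
            ((Walk.cons_isPath_iff _ _).1 hp).2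
          refine hPnotin ?_
          rw [Walk.support_cons]
          exact List.mem_cons_of_mem _ t2.start_mem_support
        exact hPP'' (pg_shared_block hadm hB1 (hC2B1 ▸ hC2))
      · have hzx : z = x := IH.1 z rfl
        subst hzx
        have hsing : ({z} : Set X) ∈ P'.1 := pg_adj_inl_inr h2
        have hB2s : B2 = {z} := pg_blk_unique (hpart P'.1 P'.2) hB2 hsing hxB2 rfl
        have hB1c : B1 = ({z} : Set X)ᶜ := by
          rw [← hB2s, ← pg_compl_of (by rwa [Set.union_comm] at hun)
            (by rwa [Set.inter_comm] at hin)]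
        exact pg_no_compl_singleton (hpart P.1 P.2) (hadm.1 P.1 P.2) (hB1c ▸ hB1)


lemma pg_exists (hpart : ∀ P ∈ Ps, Setoid.IsPartition P) (hadm : Admissible Ps) (x : X) :
    ∀ n : ℕ, ∀ (P : {P // P ∈ Ps}) (B : Set X), B ∈ P.1 → x ∈ B → B.ncard ≤ n →
      ∃ p : (plumbingGraph Ps).Walk (Sum.inl P) (Sum.inr x), p.IsPath ∧
        (∀ Q : {P // P ∈ Ps}, Sum.inl Q ∈ p.support → ∃ C ∈ Q.1, x ∈ C ∧ C ⊆ B) ∧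
        (∀ y : X, Sum.inr y ∈ p.support → y = x) := by
  intro n
  induction n with
  | zero =>
    intro P B hB hxB hl
    have : B = ∅ := Set.ncard_eq_zero (Set.toFinite B) |>.1 (Nat.le_zero.1 hl)
    exact absurd (this ▸ hxB) (Set.notMem_empty x)
  | succ n ih =>
    intro P B hB hxB hl
    by_cases hBx : B = {x}
    · have h : (plumbingGraph Ps).Adj (Sum.inl P) (Sum.inr x) := pg_adj_mk_lr (hBx ▸ hB)
      refine ⟨Walk.cons h Walk.nil, Walk.IsPath.nil.cons (by simp), ?_, ?_⟩
      · intro Q hQ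
        simp only [Walk.support_cons, Walk.support_nil, List.mem_cons,
          List.mem_singleton] at hQ
        rcases hQ with hQ | hQ | hQ
        · exact ⟨B, Sum.inl_injective hQ ▸ hB, hxB, subset_rfl⟩
        · exact absurd hQ (by simp)
        · exact absurd hQ List.not_mem_nil
      · intro y hy
        simp only [Walk.support_cons, Walk.support_nil, List.mem_cons,
          List.mem_singleton] at hy
        rcases hy with hy | hy | hy
        · exact absurd hy (by simp)
        · exact Sum.inr_injective hy
        · exact absurd hy List.not_mem_nil
    · rcases hadm.2.1 P.1 P.2 B hB with ⟨z, hz⟩ | ⟨P's, hP's, hBc⟩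
      · subst hz
        exact absurd (by simpa using hxB : x = z) (fun e => hBx (by rw [e]))
      · obtain ⟨P', hBc⟩ : ∃ P' : {P // P ∈ Ps}, Bᶜ ∈ P'.1 := ⟨⟨P's, hP's⟩, hBc⟩
        have hPP' : P ≠ P' := by
          rintro rfl
          exact pg_two_blocks (hpart P.1 P.2) (hadm.1 P.1 P.2) hB hBc
        obtain ⟨C, ⟨hC, hxC⟩, -⟩ := (hpart P'.1 P'.2).2 x
        have hCB : C ⊆ B := by
          intro a ha
          by_contra haB
          exact absurd (pg_blk_unique (hpart P'.1 P'.2) hC hBc ha haB ▸ hxC)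
            (fun h' => (h' : x ∈ Bᶜ) hxB)
        have hCneB : C ≠ B := by
          rintro rfl
          exact hPP' (pg_shared_block hadm hB hC)
        have hlt : C.ncard ≤ n := by
          have : C.ncard < B.ncard :=
            Set.ncard_lt_ncard (ssubset_of_subset_of_ne hCB hCneB) (Set.toFinite B)
          omega
        obtain ⟨p', hp', hQ', hy'⟩ := ih P' C hC hxC hlt
        have hnotin : Sum.inl P ∉ p'.support := by
          intro hmem
          obtain ⟨C2, hC2, hxC2, hsub⟩ := hQ' P hmem
          have : C2 = B := pg_blk_unique (hpart P.1 P.2) hC2 hB hxC2 hxB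
          exact hCneB (subset_antisymm hCB (this ▸ hsub))
        have h : (plumbingGraph Ps).Adj (Sum.inl P) (Sum.inl P') := pg_adj_mk_ll hPP' hB hBc
        refine ⟨Walk.cons h p', hp'.cons hnotin, ?_, ?_⟩
        · intro Q hQ
          simp only [Walk.support_cons, List.mem_cons] at hQ
          rcases hQ with hQ | hQ
          · exact ⟨B, Sum.inl_injective hQ ▸ hB, hxB, subset_rfl⟩
          · obtain ⟨C2, hC2, hxC2, hsub⟩ := hQ' Q hQ
            exact ⟨C2, hC2, hxC2, hsub.trans hCB⟩
        · intro y hy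
          simp only [Walk.support_cons, List.mem_cons] at hy
          rcases hy with hy | hy
          · exact absurd hy (by simp)
          · exact hy' y hy

lemma pg_sing (hpart : ∀ P ∈ Ps, Setoid.IsPartition P) (hadm : Admissible Ps) (y : X) :
    ∀ n : ℕ, ∀ (P : {P // P ∈ Ps}) (B : Set X), B ∈ P.1 → y ∈ B → B.ncard ≤ n →
      ∃ Q : {P // P ∈ Ps}, ({y} : Set X) ∈ Q.1 := by
  intro n
  induction n with
  | zero =>
    intro P B hB hyB hl
    have : B = ∅ := Set.ncard_eq_zero (Set.toFinite B) |>.1 (Nat.le_zero.1 hl)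
    exact absurd (this ▸ hyB) (Set.notMem_empty y)
  | succ n ih =>
    intro P B hB hyB hl
    by_cases hBy : B = {y}
    · exact ⟨P, hBy ▸ hB⟩
    · rcases hadm.2.1 P.1 P.2 B hB with ⟨z, hz⟩ | ⟨P's, hP's, hBc⟩
      · subst hz
        exact absurd (by simpa using hyB : y = z) (fun e => hBy (by rw [e]))
      · obtain ⟨P', hBc⟩ : ∃ P' : {P // P ∈ Ps}, Bᶜ ∈ P'.1 := ⟨⟨P's, hP's⟩, hBc⟩
        obtain ⟨C, ⟨hC, hyC⟩, -⟩ := (hpart P'.1 P'.2).2 y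
        have hCB : C ⊆ B := by
          intro a ha
          by_contra haB
          exact absurd (pg_blk_unique (hpart P'.1 P'.2) hC hBc ha haB ▸ hyC)
            (fun h' => (h' : y ∈ Bᶜ) hyB)
        have hCneB : C ≠ B := by
          rintro rfl
          exact pg_two_blocks (hpart P'.1 P'.2) (hadm.1 P'.1 P'.2) hC hBc
        have hlt : C.ncard ≤ n := by
          have : C.ncard < B.ncard :=
            Set.ncard_lt_ncard (ssubset_of_subset_of_ne hCB hCneB) (Set.toFinite B)
          omega
        exact ih P' C hC hyC hlt
lemma pg_uniq (hpart : ∀ P ∈ Ps, Setoid.IsPartition P) (hadm : Admissible Ps) (x : X) :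
    ∀ n : ℕ, ∀ (v : {P // P ∈ Ps} ⊕ X) (p q : (plumbingGraph Ps).Walk v (Sum.inr x)),
      p.length ≤ n → p.IsPath → q.IsPath → p = q := by
  intro n
  induction n with
  | zero =>
    intro v p q hl hp hq
    have h0 : p.length = 0 := Nat.le_zero.1 hl
    cases p with
    | nil => exact (Walk.isPath_iff_eq_nil.1 hq).symm
    | cons h t => simp [Walk.length_cons] at h0
  | succ n ih =>
    intro v p q hl hp hq
    cases p with
    | nil => exact (Walk.isPath_iff_eq_nil.1 hq).symm
    | cons hadj t =>
      cases q with
      | nil =>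
        have := Walk.isPath_iff_eq_nil.1 hp
        simp at this
      | cons hadj' t' =>
        rename_i u u'
        rcases v with P | y
        · -- v = inl P : forced second vertex
          have key : ∀ (u2 : {P // P ∈ Ps} ⊕ X) (h2 : (plumbingGraph Ps).Adj (Sum.inl P) u2)
              (t2 : (plumbingGraph Ps).Walk u2 (Sum.inr x)), (Walk.cons h2 t2).IsPath →
              ∀ (u3 : {P // P ∈ Ps} ⊕ X) (h3 : (plumbingGraph Ps).Adj (Sum.inl P) u3)
              (t3 : (plumbingGraph Ps).Walk u3 (Sum.inr x)), (Walk.cons h3 t3).IsPath →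
              u2 = u3 := by
            intro u2 h2 t2 hp2 u3 h3 t3 hp3
            have F2 := pg_forced hpart hadm x t2.length P u2 h2 t2 hp2 le_rfl
            have F3 := pg_forced hpart hadm x t3.length P u3 h3 t3 hp3 le_rfl
            rcases u2 with P2 | z2 <;> rcases u3 with P3 | z3
            · -- both inl
              obtain ⟨hne2, B1, hB1, B2, hB2, hun, hin⟩ := pg_adj_inl_inl h2
              obtain ⟨hne3, C1, hC1, C2, hC2, hcu, hci⟩ := pg_adj_inl_inl h3
              have hx1 : x ∈ B1 := F2.2 P2 B1 B2 rfl hB1 hB2 hun hin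
              have hx2 : x ∈ C1 := F3.2 P3 C1 C2 rfl hC1 hC2 hcu hci
              have hBC : B1 = C1 := pg_blk_unique (hpart P.1 P.2) hB1 hC1 hx1 hx2
              have hB2C2 : B2 = C2 := by
                rw [pg_compl_of hun hin, pg_compl_of hcu hci, hBC]
              exact congrArg Sum.inl (pg_shared_block hadm hB2 (hB2C2 ▸ hC2))
            · -- inl vs inr : contradiction
              have hz3 : z3 = x := F3.1 z3 rfl
              have hsing : ({x} : Set X) ∈ P.1 := hz3 ▸ pg_adj_inl_inr h3
              obtain ⟨hne2, B1, hB1, B2, hB2, hun, hin⟩ := pg_adj_inl_inl h2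
              have hx1 : x ∈ B1 := F2.2 P2 B1 B2 rfl hB1 hB2 hun hin
              have hB1s : B1 = {x} := pg_blk_unique (hpart P.1 P.2) hB1 hsing hx1 rfl
              have hB2c : B2 = ({x} : Set X)ᶜ := by rw [pg_compl_of hun hin, hB1s]
              exact absurd (hB2c ▸ hB2)
                (fun h' => pg_no_compl_singleton (hpart P2.1 P2.2) (hadm.1 P2.1 P2.2) h')
            · -- inr vs inl : contradiction (symmetric)
              have hz2 : z2 = x := F2.1 z2 rfl
              have hsing : ({x} : Set X) ∈ P.1 := hz2 ▸ pg_adj_inl_inr h2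
              obtain ⟨hne3, C1, hC1, C2, hC2, hcu, hci⟩ := pg_adj_inl_inl h3
              have hx2 : x ∈ C1 := F3.2 P3 C1 C2 rfl hC1 hC2 hcu hci
              have hC1s : C1 = {x} := pg_blk_unique (hpart P.1 P.2) hC1 hsing hx2 rfl
              have hC2c : C2 = ({x} : Set X)ᶜ := by rw [pg_compl_of hcu hci, hC1s]
              exact absurd (hC2c ▸ hC2)
                (fun h' => pg_no_compl_singleton (hpart P3.1 P3.2) (hadm.1 P3.1 P3.2) h')
            · -- both inr
              rw [F2.1 z2 rfl, F3.1 z3 rfl]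
          have huu : u = u' := key u hadj t hp u' hadj' t' hq
          subst huu
          have ht : t = t' := ih u t t'
            (by simpa [Walk.length_cons] using hl)
            ((Walk.cons_isPath_iff _ _).1 hp).1 ((Walk.cons_isPath_iff _ _).1 hq).1
          subst ht
          rfl
        · -- v = inr y
          obtain ⟨Q, rfl, hQ⟩ := pg_adj_inr hadj
          obtain ⟨Q', rfl, hQ'⟩ := pg_adj_inr hadj'
          have hQQ : Q = Q' := pg_shared_block hadm hQ hQ'
          subst hQQ
          have ht : t = t' := ih _ t t'
            (by simpa [Walk.length_cons] using hl)
            ((Walk.cons_isPath_iff _ _).1 hp).1 ((Walk.cons_isPath_iff _ _).1 hq).1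
          subst ht
          rfl

end Main


/-- in the plumbing graph of a (nonempty) admissible set of partitions `Ps`
of `X`, every vertex `v1 ≠ x` is connected to the leaf `x ∈ X` by a unique path;
moreover if the first edge of this path joins two partitions `P1` and `P2`, then the
block of `P1` in the direction of the path (the one whose complement is the
complementary block of `P2` witnessing the edge) contains `x`. -/
theorem plumbing_unique_path {X : Type*} [Finite X] (hX : 3 ≤ Nat.card X)
    (Ps : Set (Set (Set X))) (hne : Ps.Nonempty)
    (hpart : ∀ P ∈ Ps, Setoid.IsPartition P) (hadm : Admissible Ps)
    (x : X) (v1 : {P // P ∈ Ps} ⊕ X) (hv : v1 ≠ Sum.inr x) :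
    (∃! p : (plumbingGraph Ps).Walk v1 (Sum.inr x), p.IsPath) ∧
    (∀ (P1 P2 : {P // P ∈ Ps}) (p : (plumbingGraph Ps).Walk v1 (Sum.inr x)),
      p.IsPath → v1 = Sum.inl P1 → p.getVert 1 = Sum.inl P2 →
      ∃ B1 ∈ (P1 : Set (Set X)), ∃ B2 ∈ (P2 : Set (Set X)),
        B1 ∩ B2 = ∅ ∧ B1 ∪ B2 = Set.univ ∧ x ∈ B1) := by
  constructor
  · rcases v1 with P | y
    · obtain ⟨B, ⟨hB, hxB⟩, -⟩ := (hpart P.1 P.2).2 x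
      obtain ⟨p, hp, -, -⟩ := pg_exists hpart hadm x B.ncard P B hB hxB le_rfl
      exact ⟨p, hp, fun q hq => pg_uniq hpart hadm x q.length _ q p le_rfl hq hp⟩
    · have hyx : y ≠ x := fun e => hv (by rw [e])
      obtain ⟨P0, hP0⟩ := hne
      obtain ⟨B0, ⟨hB0, hyB0⟩, -⟩ := (hpart P0 hP0).2 y
      obtain ⟨Q, hQ⟩ := pg_sing hpart hadm y B0.ncard ⟨P0, hP0⟩ B0 hB0 hyB0 le_rfl
      obtain ⟨B, ⟨hB, hxB⟩, -⟩ := (hpart Q.1 Q.2).2 x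
      obtain ⟨p, hp, hsupQ, hsupy⟩ := pg_exists hpart hadm x B.ncard Q B hB hxB le_rfl
      have hadjy : (plumbingGraph Ps).Adj (Sum.inr y) (Sum.inl Q) := pg_adj_mk_rl hQ
      have hni : Sum.inr y ∉ p.support := fun hmem => hyx (hsupy y hmem)
      exact ⟨Walk.cons hadjy p, hp.cons hni,
        fun q hq => pg_uniq hpart hadm x q.length _ q (Walk.cons hadjy p) le_rfl hq
          (hp.cons hni)⟩
  · intro P1 P2 p hp hv1 hg
    subst hv1
    obtain ⟨u, h, t, rfl⟩ := Walk.exists_eq_cons_of_ne (by simp) p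
    have hu : u = Sum.inl P2 := by
      simpa [Walk.getVert_cons_succ, Walk.getVert_zero] using hg
    subst hu
    obtain ⟨hne', B1, hB1, B2, hB2, hun, hin⟩ := pg_adj_inl_inl h
    have hx1 : x ∈ B1 :=
      (pg_forced hpart hadm x t.length P1 _ h t hp le_rfl).2 P2 B1 B2 rfl hB1 hB2 hun hin
    exact ⟨B1, hB1, B2, hB2, hin, hun, hx1⟩
end

section
/- Let (M_n) be a sequence of Möbius transformations of P¹(ℂ) that converges pointwise at three fixed distinct points z0, z1, z∞ to three distinct limits w0, w1, w∞. Then (M_n) converges locally uniformly on P¹(ℂ) to the unique Möbius transformation M with M(z0)=w0, M(z1)=w1, M(z∞)=w∞. -/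
noncomputable section

/-- The Möbius map `z ↦ (a z + b)/(c z + d)` on the Riemann sphere `P¹(ℂ)`,
modeled as `Option ℂ` (`none` being the point at infinity). -/
def moebiusMap (a b c d : ℂ) : Option ℂ → Option ℂ :=
  fun z => z.elim (if c = 0 then none else some (a / c))
    (fun w => if c * w + d = 0 then none else some ((a * w + b) / (c * w + d)))

/-- A map of the Riemann sphere is a Möbius transformation if it is induced by an
invertible `2 × 2` complex matrix. -/
def IsMoebius (φ : Option ℂ → Option ℂ) : Prop :=
  ∃ a b c d : ℂ, a * d - b * c ≠ 0 ∧ φ = moebiusMap a b c d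

/-- The chordal (spherical) metric on the Riemann sphere `P¹(ℂ) = Option ℂ`. -/
def chordal : Option ℂ → Option ℂ → ℝ := fun z w =>
  z.elim (w.elim 0 fun b => 2 / Real.sqrt (1 + ‖b‖ ^ 2))
    (fun a => w.elim (2 / Real.sqrt (1 + ‖a‖ ^ 2))
      (fun b => 2 * ‖a - b‖ /
        (Real.sqrt (1 + ‖a‖ ^ 2) * Real.sqrt (1 + ‖b‖ ^ 2))))

/-! ### Homogeneous coordinates -/

def cross (u v : ℂ × ℂ) : ℂ := u.1 * v.2 - u.2 * v.1

def nrm (u : ℂ × ℂ) : ℝ := Real.sqrt (‖u.1‖ ^ 2 + ‖u.2‖ ^ 2)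

def app (a b c d : ℂ) (u : ℂ × ℂ) : ℂ × ℂ := (a * u.1 + b * u.2, c * u.1 + d * u.2)

def eN (a b c d : ℂ) : ℝ :=
  Real.sqrt (‖a‖ ^ 2 + ‖b‖ ^ 2 + ‖c‖ ^ 2 + ‖d‖ ^ 2)

def proj (u : ℂ × ℂ) : Option ℂ := if u.2 = 0 then none else some (u.1 / u.2)

def vecOf : Option ℂ → ℂ × ℂ := fun z => z.elim (1, 0) (fun w => (w, 1))

lemma nrm_nonneg (u : ℂ × ℂ) : 0 ≤ nrm u := Real.sqrt_nonneg _

lemma nrm_pos {u : ℂ × ℂ} (hu : u ≠ 0) : 0 < nrm u := by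
  apply Real.sqrt_pos.2
  have h1 : u.1 ≠ 0 ∨ u.2 ≠ 0 := by
    by_contra hc
    push_neg at hc
    exact hu (Prod.ext hc.1 hc.2)
  have a1 : (0:ℝ) ≤ ‖u.1‖ ^ 2 := sq_nonneg _
  have a2 : (0:ℝ) ≤ ‖u.2‖ ^ 2 := sq_nonneg _
  rcases h1 with h1 | h1
  · have : 0 < ‖u.1‖ ^ 2 := by
      have := norm_pos_iff.mpr h1
      positivity
    linarith
  · have : 0 < ‖u.2‖ ^ 2 := by
      have := norm_pos_iff.mpr h1
      positivity
    linarith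

lemma abs_cross_le (u v : ℂ × ℂ) : ‖cross u v‖ ≤ nrm u * nrm v := by
  have h1 : ‖cross u v‖ ≤
      ‖u.1‖ * ‖v.2‖ + ‖u.2‖ * ‖v.1‖ := by
    refine (norm_sub_le _ _).trans ?_
    simp [norm_mul]
  refine h1.trans ?_
  have h2 : nrm u * nrm v =
      Real.sqrt ((‖u.1‖ ^ 2 + ‖u.2‖ ^ 2) *
        (‖v.1‖ ^ 2 + ‖v.2‖ ^ 2)) := by
    rw [nrm, nrm, Real.sqrt_mul (by positivity)]
  rw [h2]
  rw [show ‖u.1‖ * ‖v.2‖ + ‖u.2‖ * ‖v.1‖ =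
    Real.sqrt ((‖u.1‖ * ‖v.2‖ + ‖u.2‖ * ‖v.1‖)^2) by
      rw [Real.sqrt_sq (by positivity)]]
  apply Real.sqrt_le_sqrt
  nlinarith [sq_nonneg (‖u.1‖ * ‖v.1‖ - ‖u.2‖ * ‖v.2‖),
    norm_nonneg u.1, norm_nonneg u.2, norm_nonneg v.1, norm_nonneg v.2]

lemma cross_app_app (a b c d : ℂ) (u v : ℂ × ℂ) :
    cross (app a b c d u) (app a b c d v) = (a * d - b * c) * cross u v := by
  simp only [cross, app]
  ring

lemma nrm_smul (t : ℂ) (u : ℂ × ℂ) : nrm (t * u.1, t * u.2) = ‖t‖ * nrm u := by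
  simp only [nrm, norm_mul, mul_pow]
  rw [← mul_add, Real.sqrt_mul (by positivity), Real.sqrt_sq (norm_nonneg t)]

lemma nrm_app_le (a b c d : ℂ) (u : ℂ × ℂ) :
    nrm (app a b c d u) ≤ eN a b c d * nrm u := by
  have key : ∀ x y : ℂ, ‖x * u.1 + y * u.2‖ ^ 2 ≤
      (‖x‖ ^ 2 + ‖y‖ ^ 2) * (‖u.1‖ ^2 + ‖u.2‖ ^2) := by
    intro x y
    have h1 : ‖x * u.1 + y * u.2‖ ≤
        ‖x‖ * ‖u.1‖ + ‖y‖ * ‖u.2‖ := by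
      refine (norm_add_le _ _).trans ?_
      simp [norm_mul]
    nlinarith [sq_nonneg (‖x‖ * ‖u.2‖ - ‖y‖ * ‖u.1‖),
      norm_nonneg (x * u.1 + y * u.2), norm_nonneg x, norm_nonneg y,
      norm_nonneg u.1, norm_nonneg u.2]
  rw [nrm, eN, nrm, ← Real.sqrt_mul (by positivity)]
  apply Real.sqrt_le_sqrt
  have h1 := key a b
  have h2 := key c d
  simp only [app]
  nlinarith [sq_nonneg (‖u.1‖), sq_nonneg (‖u.2‖)]

lemma eN_pos {a b c d : ℂ} (h : a * d - b * c ≠ 0) : 0 < eN a b c d := by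
  apply Real.sqrt_pos.2
  by_contra hc
  push_neg at hc
  have h1 : ‖a‖ = 0 ∧ ‖b‖ = 0 ∧ ‖c‖ = 0 ∧ ‖d‖ = 0 := by
    constructor
    · nlinarith [sq_nonneg (‖a‖), sq_nonneg (‖b‖), sq_nonneg (‖c‖),
        sq_nonneg (‖d‖), norm_nonneg a]
    constructor
    · nlinarith [sq_nonneg (‖a‖), sq_nonneg (‖b‖), sq_nonneg (‖c‖),
        sq_nonneg (‖d‖), norm_nonneg b]
    constructor
    · nlinarith [sq_nonneg (‖a‖), sq_nonneg (‖b‖), sq_nonneg (‖c‖),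
        sq_nonneg (‖d‖), norm_nonneg c]
    · nlinarith [sq_nonneg (‖a‖), sq_nonneg (‖b‖), sq_nonneg (‖c‖),
        sq_nonneg (‖d‖), norm_nonneg d]
  apply h
  rw [norm_eq_zero.1 h1.1, norm_eq_zero.1 h1.2.1,
    norm_eq_zero.1 h1.2.2.1, norm_eq_zero.1 h1.2.2.2]
  ring

lemma nrm_app_ge (a b c d : ℂ) (u : ℂ × ℂ) :
    ‖a * d - b * c‖ * nrm u ≤ eN a b c d * nrm (app a b c d u) := by
  have hadj : app d (-b) (-c) a (app a b c d u) =
      ((a * d - b * c) * u.1, (a * d - b * c) * u.2) := by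
    simp only [app, Prod.mk.injEq]
    constructor <;> ring
  have h1 := nrm_app_le d (-b) (-c) a (app a b c d u)
  rw [hadj, nrm_smul] at h1
  have h2 : eN d (-b) (-c) a = eN a b c d := by
    simp only [eN, norm_neg]
    congr 1
    ring
  rw [h2] at h1
  exact h1

lemma app_ne_zero {a b c d : ℂ} (h : a * d - b * c ≠ 0) {u : ℂ × ℂ} (hu : u ≠ 0) :
    app a b c d u ≠ 0 := by
  intro hc
  have h1 := nrm_app_ge a b c d u
  rw [hc] at h1
  have h2 : nrm (0 : ℂ × ℂ) = 0 := by simp [nrm]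
  rw [h2, mul_zero] at h1
  have h3 := mul_pos (norm_pos_iff.mpr h) (nrm_pos hu)
  linarith

lemma vecOf_ne_zero (z : Option ℂ) : vecOf z ≠ 0 := by
  cases z <;> simp [vecOf]

lemma proj_vecOf (z : Option ℂ) : proj (vecOf z) = z := by
  cases z <;> simp [vecOf, proj]

lemma moebiusMap_eq_proj (a b c d : ℂ) (z : Option ℂ) :
    moebiusMap a b c d z = proj (app a b c d (vecOf z)) := by
  cases z with
  | none => simp [moebiusMap, vecOf, app, proj]
  | some w => simp [moebiusMap, vecOf, app, proj]

lemma proj_smul {t : ℂ} (ht : t ≠ 0) (u : ℂ × ℂ) : proj (t * u.1, t * u.2) = proj u := by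
  simp only [proj, mul_eq_zero, ht, false_or]
  by_cases h : u.2 = 0
  · simp [h]
  · simp [h, mul_div_mul_left _ _ ht]

lemma moebiusMap_smul {t : ℂ} (ht : t ≠ 0) (a b c d : ℂ) :
    moebiusMap (t * a) (t * b) (t * c) (t * d) = moebiusMap a b c d := by
  funext z
  rw [moebiusMap_eq_proj, moebiusMap_eq_proj]
  have : app (t * a) (t * b) (t * c) (t * d) (vecOf z) =
      (t * (app a b c d (vecOf z)).1, t * (app a b c d (vecOf z)).2) := by
    simp only [app, Prod.mk.injEq]
    constructor <;> ring
  rw [this, proj_smul ht]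

lemma sqrt_one_add_sq (x y : ℂ) (hy : y ≠ 0) :
    Real.sqrt (1 + ‖x / y‖ ^ 2) =
      Real.sqrt (‖x‖ ^ 2 + ‖y‖ ^ 2) / ‖y‖ := by
  rw [norm_div]
  have hy' : (0:ℝ) < ‖y‖ := norm_pos_iff.mpr hy
  rw [div_pow, eq_div_iff (ne_of_gt hy'), ← Real.sqrt_sq hy'.le,
    ← Real.sqrt_mul (by positivity)]
  congr 1
  rw [Real.sqrt_sq hy'.le]
  field_simp
  ring

lemma chordal_none_none : chordal none none = 0 := rfl
lemma chordal_none_some (b : ℂ) :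
    chordal none (some b) = 2 / Real.sqrt (1 + ‖b‖ ^ 2) := rfl
lemma chordal_some_none (a : ℂ) :
    chordal (some a) none = 2 / Real.sqrt (1 + ‖a‖ ^ 2) := rfl
lemma chordal_some_some (a b : ℂ) :
    chordal (some a) (some b) = 2 * ‖a - b‖ /
      (Real.sqrt (1 + ‖a‖ ^ 2) * Real.sqrt (1 + ‖b‖ ^ 2)) := rfl

lemma proj_of_ne {u : ℂ × ℂ} (h : u.2 ≠ 0) : proj u = some (u.1 / u.2) := by
  simp [proj, h]

lemma proj_of_eq {u : ℂ × ℂ} (h : u.2 = 0) : proj u = none := by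
  simp [proj, h]

lemma chordal_proj {u v : ℂ × ℂ} (hu : u ≠ 0) (hv : v ≠ 0) :
    chordal (proj u) (proj v) = 2 * ‖cross u v‖ / (nrm u * nrm v) := by
  have hu1 : u.2 = 0 → u.1 ≠ 0 := fun h' hc => hu (Prod.ext hc h')
  have hv1 : v.2 = 0 → v.1 ≠ 0 := fun h' hc => hv (Prod.ext hc h')
  by_cases h2 : u.2 = 0 <;> by_cases h4 : v.2 = 0
  · rw [proj_of_eq h2, proj_of_eq h4, chordal_none_none]
    have : cross u v = 0 := by rw [cross, h2, h4]; ring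
    rw [this]
    simp
  · rw [proj_of_eq h2, proj_of_ne h4, chordal_none_some, sqrt_one_add_sq _ _ h4]
    have hnu : nrm u = ‖u.1‖ := by
      rw [nrm, h2]
      simp [Real.sqrt_sq (norm_nonneg u.1)]
    have hcr : ‖cross u v‖ = ‖u.1‖ * ‖v.2‖ := by
      rw [cross, h2]
      rw [zero_mul, sub_zero, norm_mul]
    rw [hnu, hcr, nrm]
    have h1 : (0:ℝ) < ‖u.1‖ := norm_pos_iff.mpr (hu1 h2)
    have h3 : (0:ℝ) < ‖v.2‖ := norm_pos_iff.mpr h4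
    have h5 : (0:ℝ) < Real.sqrt (‖v.1‖ ^ 2 + ‖v.2‖ ^ 2) := by
      apply Real.sqrt_pos.2; positivity
    field_simp
  · rw [proj_of_ne h2, proj_of_eq h4, chordal_some_none, sqrt_one_add_sq _ _ h2]
    have hnv : nrm v = ‖v.1‖ := by
      rw [nrm, h4]
      simp [Real.sqrt_sq (norm_nonneg v.1)]
    have hcr : ‖cross u v‖ = ‖u.2‖ * ‖v.1‖ := by
      rw [cross, h4]
      rw [mul_zero, zero_sub, norm_neg, norm_mul]
    rw [hnv, hcr, nrm]
    have h1 : (0:ℝ) < ‖v.1‖ := norm_pos_iff.mpr (hv1 h4)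
    have h3 : (0:ℝ) < ‖u.2‖ := norm_pos_iff.mpr h2
    have h5 : (0:ℝ) < Real.sqrt (‖u.1‖ ^ 2 + ‖u.2‖ ^ 2) := by
      apply Real.sqrt_pos.2; positivity
    field_simp
  · rw [proj_of_ne h2, proj_of_ne h4, chordal_some_some,
      sqrt_one_add_sq _ _ h2, sqrt_one_add_sq _ _ h4]
    have habs : ‖u.1 / u.2 - v.1 / v.2‖ =
        ‖cross u v‖ / (‖u.2‖ * ‖v.2‖) := by
      rw [show u.1 / u.2 - v.1 / v.2 = cross u v / (u.2 * v.2) by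
        rw [cross]; field_simp]
      rw [norm_div, norm_mul]
    rw [habs, nrm, nrm]
    have h1 : (0:ℝ) < ‖u.2‖ := norm_pos_iff.mpr h2
    have h3 : (0:ℝ) < ‖v.2‖ := norm_pos_iff.mpr h4
    have h5 : (0:ℝ) < Real.sqrt (‖u.1‖ ^ 2 + ‖u.2‖ ^ 2) := by
      apply Real.sqrt_pos.2; positivity
    have h6 : (0:ℝ) < Real.sqrt (‖v.1‖ ^ 2 + ‖v.2‖ ^ 2) := by
      apply Real.sqrt_pos.2; positivity
    field_simp

lemma proj_eq_of_cross_eq_zero {u v : ℂ × ℂ} (hu : u ≠ 0) (hv : v ≠ 0)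
    (h : cross u v = 0) : proj u = proj v := by
  have hu1 : u.2 = 0 → u.1 ≠ 0 := fun h' hc => hu (Prod.ext hc h')
  have hv1 : v.2 = 0 → v.1 ≠ 0 := fun h' hc => hv (Prod.ext hc h')
  rw [cross, sub_eq_zero] at h
  by_cases h2 : u.2 = 0 <;> by_cases h4 : v.2 = 0
  · rw [proj_of_eq h2, proj_of_eq h4]
  · exfalso
    rw [h2, zero_mul] at h
    rcases mul_eq_zero.1 h with h' | h'
    · exact (hu1 h2) h'
    · exact h4 h'
  · exfalso
    rw [h4, mul_zero] at h
    rcases mul_eq_zero.1 h.symm with h' | h'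
    · exact h2 h'
    · exact (hv1 h4) h'
  · rw [proj_of_ne h2, proj_of_ne h4]
    congr 1
    field_simp
    linear_combination h

lemma cross_eq_zero_of_proj_eq {u v : ℂ × ℂ} (hu : u ≠ 0) (hv : v ≠ 0)
    (h : proj u = proj v) : cross u v = 0 := by
  by_cases h2 : u.2 = 0 <;> by_cases h4 : v.2 = 0
  · rw [cross, h2, h4]; ring
  · exfalso
    rw [proj_of_eq h2, proj_of_ne h4] at h
    exact absurd h (by simp)
  · exfalso
    rw [proj_of_ne h2, proj_of_eq h4] at h
    exact absurd h (by simp)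
  · rw [proj_of_ne h2, proj_of_ne h4, Option.some.injEq] at h
    rw [cross, sub_eq_zero]
    field_simp at h
    linear_combination h

lemma cross_vecOf_ne {z z' : Option ℂ} (h : z ≠ z') : cross (vecOf z) (vecOf z') ≠ 0 := by
  intro hc
  apply h
  rw [← proj_vecOf z, ← proj_vecOf z']
  exact proj_eq_of_cross_eq_zero (vecOf_ne_zero z) (vecOf_ne_zero z') hc

lemma quad_three_roots {x0 y0 x1 y1 x2 y2 α β γ : ℂ}
    (c01 : x0 * y1 - x1 * y0 ≠ 0) (c02 : x0 * y2 - x2 * y0 ≠ 0)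
    (c12 : x1 * y2 - x2 * y1 ≠ 0)
    (e0 : α * x0 ^ 2 + β * (x0 * y0) + γ * y0 ^ 2 = 0)
    (e1 : α * x1 ^ 2 + β * (x1 * y1) + γ * y1 ^ 2 = 0)
    (e2 : α * x2 ^ 2 + β * (x2 * y2) + γ * y2 ^ 2 = 0) :
    α = 0 ∧ β = 0 ∧ γ = 0 := by
  have hD : (x0 * y1 - x1 * y0) * ((x0 * y2 - x2 * y0) * (x1 * y2 - x2 * y1)) ≠ 0 :=
    mul_ne_zero c01 (mul_ne_zero c02 c12)
  refine ⟨?_, ?_, ?_⟩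
  · have h : α * ((x0 * y1 - x1 * y0) * ((x0 * y2 - x2 * y0) * (x1 * y2 - x2 * y1))) = 0 := by
      linear_combination (y1 * y2 * (x1 * y2 - x2 * y1)) * e0 -
        (y0 * y2 * (x0 * y2 - x2 * y0)) * e1 + (y0 * y1 * (x0 * y1 - x1 * y0)) * e2
    exact (mul_eq_zero.1 h).resolve_right hD
  · have h : β * ((x0 * y1 - x1 * y0) * ((x0 * y2 - x2 * y0) * (x1 * y2 - x2 * y1))) = 0 := by
      linear_combination (-(x1 * y2 - x2 * y1) * (x1 * y2 + x2 * y1)) * e0 +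
        ((x0 * y2 - x2 * y0) * (x0 * y2 + x2 * y0)) * e1 -
        ((x0 * y1 - x1 * y0) * (x0 * y1 + x1 * y0)) * e2
    exact (mul_eq_zero.1 h).resolve_right hD
  · have h : γ * ((x0 * y1 - x1 * y0) * ((x0 * y2 - x2 * y0) * (x1 * y2 - x2 * y1))) = 0 := by
      linear_combination (x1 * x2 * (x1 * y2 - x2 * y1)) * e0 -
        (x0 * x2 * (x0 * y2 - x2 * y0)) * e1 + (x0 * x1 * (x0 * y1 - x1 * y0)) * e2
    exact (mul_eq_zero.1 h).resolve_right hD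

/-- Two Möbius transformations agreeing at three distinct points are equal. -/
lemma moebius_unique {f g : Option ℂ → Option ℂ} (hf : IsMoebius f) (hg : IsMoebius g)
    {z0 z1 z2 : Option ℂ} (h01 : z0 ≠ z1) (h02 : z0 ≠ z2) (h12 : z1 ≠ z2)
    (e0 : f z0 = g z0) (e1 : f z1 = g z1) (e2 : f z2 = g z2) : f = g := by
  obtain ⟨a, b, c, d, hdet, rfl⟩ := hf
  obtain ⟨a', b', c', d', hdet', rfl⟩ := hg
  have key : ∀ z : Option ℂ, moebiusMap a b c d z = moebiusMap a' b' c' d' z →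
      cross (app a b c d (vecOf z)) (app a' b' c' d' (vecOf z)) = 0 := by
    intro z hz
    rw [moebiusMap_eq_proj, moebiusMap_eq_proj] at hz
    exact cross_eq_zero_of_proj_eq (app_ne_zero hdet (vecOf_ne_zero z))
      (app_ne_zero hdet' (vecOf_ne_zero z)) hz
  have E0 := key z0 e0
  have E1 := key z1 e1
  have E2 := key z2 e2
  set α := a * c' - c * a' with hα
  set β := a * d' + b * c' - c * b' - d * a' with hβ
  set γ := b * d' - d * b' with hγ
  have conv : ∀ u : ℂ × ℂ, cross (app a b c d u) (app a' b' c' d' u) =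
      α * u.1 ^ 2 + β * (u.1 * u.2) + γ * u.2 ^ 2 := by
    intro u
    simp only [cross, app, hα, hβ, hγ]
    ring
  rw [conv] at E0 E1 E2
  have cc : ∀ {z z' : Option ℂ}, z ≠ z' →
      (vecOf z).1 * (vecOf z').2 - (vecOf z').1 * (vecOf z).2 ≠ 0 := by
    intro z z' h hc
    exact cross_vecOf_ne h (by rw [cross]; linear_combination hc)
  have habg := quad_three_roots (cc h01) (cc h02) (cc h12) E0 E1 E2
  funext z
  rw [moebiusMap_eq_proj, moebiusMap_eq_proj]
  apply proj_eq_of_cross_eq_zero (app_ne_zero hdet (vecOf_ne_zero z))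
    (app_ne_zero hdet' (vecOf_ne_zero z))
  rw [conv, habg.1, habg.2.1, habg.2.2]
  ring

/-! ### Matrices as quadruples, continuity and convergence -/

def appM (m : ℂ × ℂ × ℂ × ℂ) (u : ℂ × ℂ) : ℂ × ℂ := app m.1 m.2.1 m.2.2.1 m.2.2.2 u
def detM (m : ℂ × ℂ × ℂ × ℂ) : ℂ := m.1 * m.2.2.2 - m.2.1 * m.2.2.1
def eNM (m : ℂ × ℂ × ℂ × ℂ) : ℝ := eN m.1 m.2.1 m.2.2.1 m.2.2.2
def mobM (m : ℂ × ℂ × ℂ × ℂ) : Option ℂ → Option ℂ := moebiusMap m.1 m.2.1 m.2.2.1 m.2.2.2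

lemma continuous_eNM : Continuous eNM := by
  unfold eNM eN
  apply Real.continuous_sqrt.comp
  apply Continuous.add
  apply Continuous.add
  apply Continuous.add
  · exact (continuous_norm.comp continuous_fst).pow 2
  · exact (continuous_norm.comp (continuous_fst.comp continuous_snd)).pow 2
  · exact (continuous_norm.comp
      (continuous_fst.comp (continuous_snd.comp continuous_snd))).pow 2
  · exact (continuous_norm.comp
      (continuous_snd.comp (continuous_snd.comp continuous_snd))).pow 2

lemma continuous_appM (u : ℂ × ℂ) : Continuous (fun m => appM m u) := by
  unfold appM app
  fun_prop

lemma continuous_nrm : Continuous nrm := by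
  unfold nrm
  apply Real.continuous_sqrt.comp
  exact ((continuous_norm.comp continuous_fst).pow 2).add
    ((continuous_norm.comp continuous_snd).pow 2)

lemma eNM_zero : eNM 0 = 0 := by
  simp [eNM, eN]

lemma nrm_add_le (x y : ℂ × ℂ) : nrm (x + y) ≤ nrm x + nrm y := by
  have hx := Real.sq_sqrt (show (0:ℝ) ≤ ‖x.1‖ ^ 2 + ‖x.2‖ ^ 2 by positivity)
  have hy := Real.sq_sqrt (show (0:ℝ) ≤ ‖y.1‖ ^ 2 + ‖y.2‖ ^ 2 by positivity)
  have hcs : ‖x.1‖ * ‖y.1‖ + ‖x.2‖ * ‖y.2‖ ≤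
      nrm x * nrm y := by
    rw [show nrm x * nrm y = Real.sqrt ((‖x.1‖ ^2 + ‖x.2‖ ^2) *
        (‖y.1‖ ^2 + ‖y.2‖ ^2)) by
      rw [nrm, nrm, Real.sqrt_mul (by positivity)]]
    rw [show ‖x.1‖ * ‖y.1‖ + ‖x.2‖ * ‖y.2‖ =
        Real.sqrt ((‖x.1‖ * ‖y.1‖ + ‖x.2‖ * ‖y.2‖)^2) by
      rw [Real.sqrt_sq (by positivity)]]
    apply Real.sqrt_le_sqrt
    nlinarith [sq_nonneg (‖x.1‖ * ‖y.2‖ - ‖x.2‖ * ‖y.1‖)]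
  rw [nrm, show (x+y).1 = x.1 + y.1 from rfl, show (x+y).2 = x.2 + y.2 from rfl]
  rw [show nrm x + nrm y = Real.sqrt ((nrm x + nrm y)^2) by
    rw [Real.sqrt_sq (add_nonneg (nrm_nonneg x) (nrm_nonneg y))]]
  apply Real.sqrt_le_sqrt
  have h1 : ‖x.1 + y.1‖ ≤ ‖x.1‖ + ‖y.1‖ := norm_add_le _ _
  have h2 : ‖x.2 + y.2‖ ≤ ‖x.2‖ + ‖y.2‖ := norm_add_le _ _
  have e1 : nrm x ^ 2 = ‖x.1‖ ^ 2 + ‖x.2‖ ^ 2 := by rw [nrm]; exact hx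
  have e2 : nrm y ^ 2 = ‖y.1‖ ^ 2 + ‖y.2‖ ^ 2 := by rw [nrm]; exact hy
  nlinarith [norm_nonneg (x.1 + y.1), norm_nonneg (x.2 + y.2),
    norm_nonneg x.1, norm_nonneg x.2, norm_nonneg y.1,
    norm_nonneg y.2]

lemma appM_sub (m m' : ℂ × ℂ × ℂ × ℂ) (u : ℂ × ℂ) :
    appM (m - m') u = appM m u - appM m' u := by
  simp only [appM, app, Prod.fst_sub, Prod.snd_sub, Prod.mk_sub_mk, Prod.mk.injEq]
  constructor <;> ring

lemma cross_appM_sub (m m' : ℂ × ℂ × ℂ × ℂ) (u : ℂ × ℂ) :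
    cross (appM m u) (appM m' u) = cross (appM (m - m') u) (appM m' u) := by
  simp only [cross, appM, app, Prod.fst_sub, Prod.snd_sub]
  ring

lemma nrm_appM_le (m : ℂ × ℂ × ℂ × ℂ) (u : ℂ × ℂ) : nrm (appM m u) ≤ eNM m * nrm u :=
  nrm_app_le _ _ _ _ _

lemma nrm_appM_ge (m : ℂ × ℂ × ℂ × ℂ) (u : ℂ × ℂ) :
    ‖detM m‖ * nrm u ≤ eNM m * nrm (appM m u) :=
  nrm_app_ge _ _ _ _ _

/-- Uniform convergence of Möbius maps from convergence of matrices to an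
invertible matrix. -/
lemma uniform_conv {F : ℕ → ℂ × ℂ × ℂ × ℂ} {A : ℂ × ℂ × ℂ × ℂ}
    (hF : Filter.Tendsto F Filter.atTop (nhds A)) (hdetA : detM A ≠ 0)
    (hdetF : ∀ n, detM (F n) ≠ 0) {ε : ℝ} (hε : 0 < ε) :
    ∃ N : ℕ, ∀ n ≥ N, ∀ z : Option ℂ,
      chordal (proj (appM (F n) (vecOf z))) (proj (appM A (vecOf z))) < ε := by
  have heNA : 0 < eNM A := eN_pos hdetA
  set c : ℝ := ‖detM A‖ / eNM A with hc
  have hcpos : 0 < c := div_pos (norm_pos_iff.mpr hdetA) heNA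
  set δ : ℝ := min (c / 2) (ε * c / 8) with hδdef
  have hδpos : 0 < δ := lt_min (by linarith) (by positivity)
  -- eventually eNM (F n - A) < δ
  have htend : Filter.Tendsto (fun n => eNM (F n - A)) Filter.atTop (nhds 0) := by
    have h1 : Filter.Tendsto (fun n => F n - A) Filter.atTop (nhds 0) := by
      simpa using hF.sub (tendsto_const_nhds (x := A))
    have := (continuous_eNM.tendsto 0).comp h1
    rwa [eNM_zero] at this
  have hev : ∀ᶠ n in Filter.atTop, eNM (F n - A) < δ :=
    (htend.eventually (eventually_lt_nhds hδpos)).mono (fun n h => h)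
  obtain ⟨N, hN⟩ := Filter.eventually_atTop.1 hev
  refine ⟨N, fun n hn z => ?_⟩
  set v : ℂ × ℂ := vecOf z with hv
  have hvne : v ≠ 0 := vecOf_ne_zero z
  have hnv : 0 < nrm v := nrm_pos hvne
  have hδn : eNM (F n - A) < δ := hN n hn
  have hAv : appM A v ≠ 0 := app_ne_zero hdetA hvne
  have hFv : appM (F n) v ≠ 0 := app_ne_zero (hdetF n) hvne
  have hnAv : 0 < nrm (appM A v) := nrm_pos hAv
  have hnFv : 0 < nrm (appM (F n) v) := nrm_pos hFv
  -- lower bound on nrm (A v)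
  have hlowA : c * nrm v ≤ nrm (appM A v) := by
    have := nrm_appM_ge A v
    rw [hc, div_mul_eq_mul_div, div_le_iff₀ heNA]
    linarith [this]
  -- bound on the difference
  have hdiff : nrm (appM (F n - A) v) ≤ δ * nrm v := by
    refine (nrm_appM_le _ _).trans ?_
    apply mul_le_mul_of_nonneg_right (le_of_lt hδn) (nrm_nonneg v)
  -- lower bound on nrm (F n v)
  have hlowF : (c / 2) * nrm v ≤ nrm (appM (F n) v) := by
    have h1 : nrm (appM A v) ≤ nrm (appM (F n) v) + nrm (appM (A - F n) v) := by
      have : appM A v = appM (F n) v + appM (A - F n) v := by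
        rw [appM_sub]; ring
      rw [this]
      exact nrm_add_le _ _
    have h2 : nrm (appM (A - F n) v) ≤ δ * nrm v := by
      have : A - F n = -(F n - A) := by ring
      rw [this]
      refine (nrm_appM_le _ _).trans ?_
      have : eNM (-(F n - A)) = eNM (F n - A) := by
        simp only [eNM, eN, Prod.fst_neg, Prod.snd_neg, norm_neg]
      rw [this]
      exact mul_le_mul_of_nonneg_right (le_of_lt hδn) (nrm_nonneg v)
    have hδle : δ ≤ c / 2 := min_le_left _ _
    nlinarith
  -- numerator bound
  have hnum : ‖cross (appM (F n) v) (appM A v)‖ ≤ δ * nrm v * nrm (appM A v) := by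
    rw [cross_appM_sub]
    refine (abs_cross_le _ _).trans ?_
    apply mul_le_mul_of_nonneg_right hdiff (nrm_nonneg _)
  -- put together
  rw [chordal_proj hFv hAv]
  have hden : 0 < nrm (appM (F n) v) * nrm (appM A v) := mul_pos hnFv hnAv
  have step1 : 2 * ‖cross (appM (F n) v) (appM A v)‖ /
      (nrm (appM (F n) v) * nrm (appM A v)) ≤
      2 * (δ * nrm v * nrm (appM A v)) / ((c / 2 * nrm v) * nrm (appM A v)) := by
    apply div_le_div₀ (by positivity)
    · linarith
    · positivity
    · apply mul_le_mul_of_nonneg_right hlowF (nrm_nonneg _)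
  have step2 : 2 * (δ * nrm v * nrm (appM A v)) / ((c / 2 * nrm v) * nrm (appM A v)) =
      4 * δ / c := by
    field_simp
    ring
  have step3 : 4 * δ / c ≤ ε / 2 := by
    have hδle : δ ≤ ε * c / 8 := min_le_right _ _
    rw [div_le_div_iff₀ hcpos (by norm_num : (0:ℝ) < 2)]
    nlinarith
  calc 2 * ‖cross (appM (F n) v) (appM A v)‖ /
      (nrm (appM (F n) v) * nrm (appM A v)) ≤ 4 * δ / c := by rw [← step2]; exact step1
    _ ≤ ε / 2 := step3
    _ < ε := by linarith

/-- Identification of the pointwise limit: if matrices converge and the images at a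
point converge in the chordal metric to `w`, and the limit matrix does not kill the
representing vector, then the limit map sends the point to `w`. -/
lemma limit_point_eq {F : ℕ → ℂ × ℂ × ℂ × ℂ} {A : ℂ × ℂ × ℂ × ℂ}
    (hF : Filter.Tendsto F Filter.atTop (nhds A))
    (hdetF : ∀ n, detM (F n) ≠ 0) {v : ℂ × ℂ} (hv : v ≠ 0) (hAv : appM A v ≠ 0)
    {w : Option ℂ}
    (hconv : Filter.Tendsto (fun n => chordal (proj (appM (F n) v)) w) Filter.atTop (nhds 0)) :
    proj (appM A v) = w := by
  set s : ℂ × ℂ := vecOf w with hs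
  have hsne : s ≠ 0 := vecOf_ne_zero w
  have hsw : proj s = w := proj_vecOf w
  have hFv : ∀ n, appM (F n) v ≠ 0 := fun n => app_ne_zero (hdetF n) hv
  -- the sequence of matrices applied to v converges to appM A v
  have h1 : Filter.Tendsto (fun n => appM (F n) v) Filter.atTop (nhds (appM A v)) :=
    ((continuous_appM v).tendsto A).comp hF
  -- the chordal distance to w converges to the chordal distance of the limit
  have h2 : Filter.Tendsto (fun n => 2 * ‖cross (appM (F n) v) s‖ /
      (nrm (appM (F n) v) * nrm s)) Filter.atTop
      (nhds (2 * ‖cross (appM A v) s‖ / (nrm (appM A v) * nrm s))) := by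
    apply Filter.Tendsto.div
    · apply Filter.Tendsto.const_mul
      have hcont : Continuous (fun u : ℂ × ℂ => ‖cross u s‖) := by
        unfold cross
        exact continuous_norm.comp
          (((continuous_fst.mul continuous_const)).sub
            ((continuous_snd.mul continuous_const)))
      exact (hcont.tendsto (appM A v)).comp h1
    · exact ((continuous_nrm.tendsto (appM A v)).comp h1).mul_const (nrm s)
    · exact ne_of_gt (mul_pos (nrm_pos hAv) (nrm_pos hsne))
  have heq : (fun n => 2 * ‖cross (appM (F n) v) s‖ /
      (nrm (appM (F n) v) * nrm s)) = fun n => chordal (proj (appM (F n) v)) w := by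
    funext n
    rw [← hsw, ← chordal_proj (hFv n) hsne, hsw]
  rw [heq] at h2
  have hlim : 2 * ‖cross (appM A v) s‖ / (nrm (appM A v) * nrm s) = 0 :=
    tendsto_nhds_unique h2 hconv
  have hden : 0 < nrm (appM A v) * nrm s := mul_pos (nrm_pos hAv) (nrm_pos hsne)
  have hnum : ‖cross (appM A v) s‖ = 0 := by
    by_contra hc
    have : 0 < ‖cross (appM A v) s‖ :=
      lt_of_le_of_ne (norm_nonneg _) (Ne.symm hc)
    have : 0 < 2 * ‖cross (appM A v) s‖ / (nrm (appM A v) * nrm s) := by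
      positivity
    linarith [hlim]
  rw [← hsw]
  exact proj_eq_of_cross_eq_zero hAv hsne (norm_eq_zero.1 hnum)

/-- If `A ≠ 0` kills two non-proportional vectors, contradiction. -/
lemma eq_zero_of_two_kernel {A : ℂ × ℂ × ℂ × ℂ} {u v : ℂ × ℂ}
    (hu : appM A u = 0) (hv : appM A v = 0) (huv : cross u v ≠ 0) : A = 0 := by
  obtain ⟨a, b, c, d⟩ := A
  simp only [appM, app, Prod.mk_eq_zero, Prod.mk.injEq] at hu hv
  rw [cross] at huv
  have e1 : a * u.1 + b * u.2 = 0 := hu.1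
  have e2 : c * u.1 + d * u.2 = 0 := hu.2
  have e3 : a * v.1 + b * v.2 = 0 := hv.1
  have e4 : c * v.1 + d * v.2 = 0 := hv.2
  have ha : a * (u.1 * v.2 - u.2 * v.1) = 0 := by linear_combination v.2 * e1 - u.2 * e3
  have hb : b * (u.1 * v.2 - u.2 * v.1) = 0 := by linear_combination u.1 * e3 - v.1 * e1
  have hc : c * (u.1 * v.2 - u.2 * v.1) = 0 := by linear_combination v.2 * e2 - u.2 * e4
  have hd : d * (u.1 * v.2 - u.2 * v.1) = 0 := by linear_combination u.1 * e4 - v.1 * e2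
  have ha' : a = 0 := (mul_eq_zero.1 ha).resolve_right huv
  have hb' : b = 0 := (mul_eq_zero.1 hb).resolve_right huv
  have hc' : c = 0 := (mul_eq_zero.1 hc).resolve_right huv
  have hd' : d = 0 := (mul_eq_zero.1 hd).resolve_right huv
  simp [ha', hb', hc', hd', Prod.mk_eq_zero]

lemma eNM_ne_zero_of_one {A : ℂ × ℂ × ℂ × ℂ} (h : eNM A = 1) : A ≠ 0 := by
  intro hc
  rw [hc, eNM_zero] at h
  norm_num at h

/-- Rank one matrices send every vector outside the kernel to the same
projective point. -/
lemma proj_appM_const_of_det_zero {A : ℂ × ℂ × ℂ × ℂ} (hdet : detM A = 0)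
    {u v : ℂ × ℂ} (hu : appM A u ≠ 0) (hv : appM A v ≠ 0) :
    proj (appM A u) = proj (appM A v) := by
  apply proj_eq_of_cross_eq_zero hu hv
  have : cross (appM A u) (appM A v) = detM A * cross u v := by
    obtain ⟨a, b, c, d⟩ := A
    simp only [cross, appM, app, detM]
    ring
  rw [this, hdet, zero_mul]

/-- Bolzano–Weierstrass on the unit (Frobenius) sphere of matrices. -/
lemma exists_subseq_matrix {F : ℕ → ℂ × ℂ × ℂ × ℂ} (hF : ∀ n, eNM (F n) = 1) :
    ∃ A : ℂ × ℂ × ℂ × ℂ, eNM A = 1 ∧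
      ∃ φ : ℕ → ℕ, StrictMono φ ∧ Filter.Tendsto (F ∘ φ) Filter.atTop (nhds A) := by
  set s : Set (ℂ × ℂ × ℂ × ℂ) := {m | eNM m = 1} with hsdef
  have hclosed : IsClosed s := isClosed_eq continuous_eNM continuous_const
  have hbdd : Bornology.IsBounded s := by
    apply Bornology.IsBounded.subset (Metric.isBounded_closedBall (x := (0 : ℂ × ℂ × ℂ × ℂ)) (r := 1))
    intro m hm
    rw [Metric.mem_closedBall, dist_zero_right]
    have hm1 : ‖m.1‖ ^ 2 + ‖m.2.1‖ ^ 2 + ‖m.2.2.1‖ ^ 2 +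
        ‖m.2.2.2‖ ^ 2 = 1 := by
      have := hm
      rw [hsdef] at this
      simp only [Set.mem_setOf_eq, eNM, eN] at this
      have h0 : (0:ℝ) ≤ ‖m.1‖ ^ 2 + ‖m.2.1‖ ^ 2 + ‖m.2.2.1‖ ^ 2 +
          ‖m.2.2.2‖ ^ 2 := by positivity
      nlinarith [Real.sq_sqrt h0, this]
    have key : ∀ x : ℂ, ‖x‖ ^ 2 ≤ 1 → ‖x‖ ≤ 1 := by
      intro x hx
      nlinarith [norm_nonneg x]
    have q1 : ‖m.1‖ ^ 2 ≤ 1 := by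
      nlinarith [sq_nonneg (‖m.2.1‖), sq_nonneg (‖m.2.2.1‖),
        sq_nonneg (‖m.2.2.2‖)]
    have q2 : ‖m.2.1‖ ^ 2 ≤ 1 := by
      nlinarith [sq_nonneg (‖m.1‖), sq_nonneg (‖m.2.2.1‖),
        sq_nonneg (‖m.2.2.2‖)]
    have q3 : ‖m.2.2.1‖ ^ 2 ≤ 1 := by
      nlinarith [sq_nonneg (‖m.1‖), sq_nonneg (‖m.2.1‖),
        sq_nonneg (‖m.2.2.2‖)]
    have q4 : ‖m.2.2.2‖ ^ 2 ≤ 1 := by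
      nlinarith [sq_nonneg (‖m.1‖), sq_nonneg (‖m.2.1‖),
        sq_nonneg (‖m.2.2.1‖)]
    have b1 : ‖m.1‖ ≤ 1 := key _ q1
    have b2 : ‖m.2.1‖ ≤ 1 := key _ q2
    have b3 : ‖m.2.2.1‖ ≤ 1 := key _ q3
    have b4 : ‖m.2.2.2‖ ≤ 1 := key _ q4
    calc ‖m‖ = max ‖m.1‖ (max ‖m.2.1‖ (max ‖m.2.2.1‖ ‖m.2.2.2‖)) := by
          rw [Prod.norm_def, Prod.norm_def, Prod.norm_def]
      _ ≤ 1 := by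
          apply max_le b1
          apply max_le b2
          exact max_le b3 b4
  obtain ⟨A, hA, φ, hφ, hconv⟩ := tendsto_subseq_of_bounded hbdd (fun n => hF n)
  exact ⟨A, hclosed.closure_subset hA, φ, hφ, hconv⟩

lemma eN_smul (t a b c d : ℂ) :
    eN (t * a) (t * b) (t * c) (t * d) = ‖t‖ * eN a b c d := by
  simp only [eN, norm_mul, mul_pow]
  rw [← mul_add, ← mul_add, ← mul_add, Real.sqrt_mul (by positivity),
    Real.sqrt_sq (norm_nonneg t)]

lemma mobM_eq_proj (m : ℂ × ℂ × ℂ × ℂ) (z : Option ℂ) :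
    mobM m z = proj (appM m (vecOf z)) :=
  moebiusMap_eq_proj _ _ _ _ _

/-- if a sequence of Möbius transformations converges (in the chordal
metric) at three fixed distinct points to three distinct limits, then it converges
uniformly on the whole sphere (hence locally uniformly) to the unique Möbius
transformation sending the three points to the three limits. -/
theorem moebius_three_point_convergence
    (M : ℕ → Option ℂ → Option ℂ) (hM : ∀ n, IsMoebius (M n))
    (z0 z1 z2 w0 w1 w2 : Option ℂ)
    (hz01 : z0 ≠ z1) (hz02 : z0 ≠ z2) (hz12 : z1 ≠ z2)
    (hw01 : w0 ≠ w1) (hw02 : w0 ≠ w2) (hw12 : w1 ≠ w2)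
    (h0 : Filter.Tendsto (fun n => chordal (M n z0) w0) Filter.atTop (nhds 0))
    (h1 : Filter.Tendsto (fun n => chordal (M n z1) w1) Filter.atTop (nhds 0))
    (h2 : Filter.Tendsto (fun n => chordal (M n z2) w2) Filter.atTop (nhds 0)) :
    ∃ L : Option ℂ → Option ℂ, IsMoebius L ∧
      L z0 = w0 ∧ L z1 = w1 ∧ L z2 = w2 ∧
      (∀ L' : Option ℂ → Option ℂ, IsMoebius L' →
        L' z0 = w0 → L' z1 = w1 → L' z2 = w2 → L' = L) ∧
      ∀ ε : ℝ, 0 < ε → ∃ N : ℕ, ∀ n ≥ N, ∀ z, chordal (M n z) (L z) < ε := by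
  classical
  choose a b c d hdet heq using hM
  set m : ℕ → ℂ × ℂ × ℂ × ℂ := fun n => (a n, b n, c n, d n) with hm
  have hdetm : ∀ n, detM (m n) ≠ 0 := fun n => hdet n
  have hepos : ∀ n, 0 < eNM (m n) := fun n => eN_pos (hdet n)
  set t : ℕ → ℂ := fun n => ((eNM (m n) : ℝ) : ℂ)⁻¹ with ht
  have htne : ∀ n, t n ≠ 0 := by
    intro n
    simp only [ht, ne_eq, inv_eq_zero, Complex.ofReal_eq_zero]
    exact ne_of_gt (hepos n)
  set G : ℕ → ℂ × ℂ × ℂ × ℂ := fun n => (t n * a n, t n * b n, t n * c n, t n * d n) with hG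
  have hGdet : ∀ n, detM (G n) ≠ 0 := by
    intro n
    have : detM (G n) = t n ^ 2 * (a n * d n - b n * c n) := by
      simp only [hG, detM]
      ring
    rw [this]
    exact mul_ne_zero (pow_ne_zero 2 (htne n)) (hdet n)
  have habs_t : ∀ n, ‖t n‖ = (eNM (m n))⁻¹ := by
    intro n
    simp only [ht, norm_inv, Complex.norm_real, Real.norm_eq_abs]
    rw [abs_of_pos (hepos n)]
  have hGe : ∀ n, eNM (G n) = 1 := by
    intro n
    show eN (t n * a n) (t n * b n) (t n * c n) (t n * d n) = 1
    rw [eN_smul, habs_t n]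
    exact inv_mul_cancel₀ (ne_of_gt (hepos n))
  have hGM : ∀ n, mobM (G n) = M n := by
    intro n
    show moebiusMap (t n * a n) (t n * b n) (t n * c n) (t n * d n) = M n
    rw [moebiusMap_smul (htne n), heq n]
  -- the key subsequence extraction
  have key : ∀ φ : ℕ → ℕ, StrictMono φ → ∃ A : ℂ × ℂ × ℂ × ℂ, detM A ≠ 0 ∧
      mobM A z0 = w0 ∧ mobM A z1 = w1 ∧ mobM A z2 = w2 ∧
      ∃ ψ : ℕ → ℕ, StrictMono ψ ∧
        Filter.Tendsto ((G ∘ φ) ∘ ψ) Filter.atTop (nhds A) := by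
    intro φ hφ
    obtain ⟨A, hA1, ψ, hψ, hconv⟩ := exists_subseq_matrix (fun n => hGe (φ n))
    have hcomp : StrictMono (φ ∘ ψ) := hφ.comp hψ
    have hdetF : ∀ k, detM (((G ∘ φ) ∘ ψ) k) ≠ 0 := fun k => hGdet (φ (ψ k))
    -- transported pointwise convergence
    have conv_pt : ∀ (zi wi : Option ℂ),
        Filter.Tendsto (fun n => chordal (M n zi) wi) Filter.atTop (nhds 0) →
        Filter.Tendsto (fun k => chordal (proj (appM (((G ∘ φ) ∘ ψ) k) (vecOf zi))) wi)
          Filter.atTop (nhds 0) := by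
      intro zi wi hi
      have hi' := hi.comp hcomp.tendsto_atTop
      refine hi'.congr fun k => ?_
      show chordal (M (φ (ψ k)) zi) wi = _
      rw [show ((G ∘ φ) ∘ ψ) k = G (φ (ψ k)) from rfl, ← mobM_eq_proj, hGM]
    have c0 := conv_pt z0 w0 h0
    have c1 := conv_pt z1 w1 h1
    have c2 := conv_pt z2 w2 h2
    -- the good-point principle
    have good : ∀ (zi wi : Option ℂ),
        Filter.Tendsto (fun k => chordal (proj (appM (((G ∘ φ) ∘ ψ) k) (vecOf zi))) wi)
          Filter.atTop (nhds 0) →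
        appM A (vecOf zi) ≠ 0 → proj (appM A (vecOf zi)) = wi := by
      intro zi wi hi hAvi
      exact limit_point_eq hconv hdetF (vecOf_ne_zero zi) hAvi hi
    -- the limit matrix is invertible
    have hdetA : detM A ≠ 0 := by
      by_contra hd0
      have hAne : A ≠ 0 := eNM_ne_zero_of_one hA1
      -- at most one of the three vectors is killed
      have not_two : ∀ zi zj : Option ℂ, zi ≠ zj →
          appM A (vecOf zi) = 0 → appM A (vecOf zj) = 0 → False := by
        intro zi zj hij hi hj
        exact hAne (eq_zero_of_two_kernel hi hj (cross_vecOf_ne hij))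
      have same : ∀ zi zj wi wj : Option ℂ,
          appM A (vecOf zi) ≠ 0 → appM A (vecOf zj) ≠ 0 →
          proj (appM A (vecOf zi)) = wi → proj (appM A (vecOf zj)) = wj → wi = wj := by
        intro zi zj wi wj hi hj ei ej
        rw [← ei, ← ej]
        exact proj_appM_const_of_det_zero hd0 hi hj
      by_cases hP0 : appM A (vecOf z0) = 0
      · have hP1 : appM A (vecOf z1) ≠ 0 := fun h => not_two z0 z1 hz01 hP0 h
        have hP2 : appM A (vecOf z2) ≠ 0 := fun h => not_two z0 z2 hz02 hP0 h
        exact hw12 (same z1 z2 w1 w2 hP1 hP2 (good z1 w1 c1 hP1) (good z2 w2 c2 hP2))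
      · by_cases hP1 : appM A (vecOf z1) = 0
        · have hP2 : appM A (vecOf z2) ≠ 0 := fun h => not_two z1 z2 hz12 hP1 h
          exact hw02 (same z0 z2 w0 w2 hP0 hP2 (good z0 w0 c0 hP0) (good z2 w2 c2 hP2))
        · exact hw01 (same z0 z1 w0 w1 hP0 hP1 (good z0 w0 c0 hP0) (good z1 w1 c1 hP1))
    have hval : ∀ (zi wi : Option ℂ),
        Filter.Tendsto (fun k => chordal (proj (appM (((G ∘ φ) ∘ ψ) k) (vecOf zi))) wi)
          Filter.atTop (nhds 0) → mobM A zi = wi := by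
      intro zi wi hi
      rw [mobM_eq_proj]
      exact good zi wi hi (app_ne_zero hdetA (vecOf_ne_zero zi))
    exact ⟨A, hdetA, hval z0 w0 c0, hval z1 w1 c1, hval z2 w2 c2, ψ, hψ, hconv⟩
  -- construct the limit map from the identity subsequence
  obtain ⟨A0, hA0det, hA00, hA01, hA02, ψ0, hψ0, hconv0⟩ := key id strictMono_id
  refine ⟨mobM A0, ⟨A0.1, A0.2.1, A0.2.2.1, A0.2.2.2, hA0det, rfl⟩, hA00, hA01, hA02, ?_, ?_⟩
  · intro L' hL' e0 e1 e2
    exact moebius_unique hL' ⟨A0.1, A0.2.1, A0.2.2.1, A0.2.2.2, hA0det, rfl⟩ hz01 hz02 hz12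
      (by rw [e0, hA00]) (by rw [e1, hA01]) (by rw [e2, hA02])
  · intro ε hε
    by_contra hcon
    push_neg at hcon
    have hfreq : ∃ᶠ n in Filter.atTop, ∃ z, ε ≤ chordal (M n z) (mobM A0 z) := by
      rw [Filter.frequently_atTop]
      intro N
      obtain ⟨n, hn, z, hz⟩ := hcon N
      exact ⟨n, hn, z, hz⟩
    obtain ⟨φ, hφ, hbad⟩ := Filter.extraction_of_frequently_atTop hfreq
    obtain ⟨A, hAdet, hA0', hA1', hA2', ψ, hψ, hconvA⟩ := key φ hφ
    -- the sub-subsequence limit map agrees with mobM A0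
    have hLA : mobM A = mobM A0 := by
      apply moebius_unique ⟨A.1, A.2.1, A.2.2.1, A.2.2.2, hAdet, rfl⟩
        ⟨A0.1, A0.2.1, A0.2.2.1, A0.2.2.2, hA0det, rfl⟩ hz01 hz02 hz12
      · show mobM A z0 = mobM A0 z0
        rw [hA0', hA00]
      · show mobM A z1 = mobM A0 z1
        rw [hA1', hA01]
      · show mobM A z2 = mobM A0 z2
        rw [hA2', hA02]
    obtain ⟨N, hN⟩ := uniform_conv hconvA hAdet (fun k => hGdet (φ (ψ k))) hε
    obtain ⟨z, hz⟩ := hbad (ψ N)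
    have hlt := hN N le_rfl z
    rw [← mobM_eq_proj, ← mobM_eq_proj, hLA] at hlt
    have hMz : mobM (((G ∘ φ) ∘ ψ) N) z = M (φ (ψ N)) z := by
      rw [show ((G ∘ φ) ∘ ψ) N = G (φ (ψ N)) from rfl, hGM]
    rw [hMz] at hlt
    linarith


end
end

section
/- The map 𝔅 sending the isomorphism class of a tree of spheres T marked by X to the collection (α_t(x)) indexed by quadruples (t, x) ∈ Quad_X (t a triple of distinct elements, x a fourth distinct element) is injective on isomorphism classes of trees of spheres marked by X. -/
open SimpleGraph

noncomputable section

/-- Two vertices lie in a common branch at `v`. -/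
def SameBranch {V : Type*} (G : SimpleGraph V) (v p q : V) : Prop :=
  ∃ u, G.Adj v u ∧ p ∈ Branch G v u ∧ q ∈ Branch G v u

/-- A tree of spheres marked by `X`. -/
structure SphereTree (X V : Type*) (G : SimpleGraph V) (m : X → V)
    (a : V → X → Option ℂ) : Prop where
  marked : MarkedStableTree X V G m
  compat : ∀ v, v ∉ Set.range m → ∀ x x',
    (a v x = a v x' ↔ SameBranch G v (m x) (m x'))

set_option linter.unusedSectionVars false
set_option maxHeartbeats 1000000

namespace ChartAux

/-! ### Möbius layer -/

def lift : Option ℂ → ℂ × ℂ := fun z => z.elim (1, 0) (fun w => (w, 1))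

def mProj (p q : ℂ) : Option ℂ := if q = 0 then none else some (p / q)

lemma moebiusMap_eq (a b c d : ℂ) (z : Option ℂ) :
    moebiusMap a b c d z
      = mProj (a * (lift z).1 + b * (lift z).2) (c * (lift z).1 + d * (lift z).2) := by
  cases z <;> simp [moebiusMap, lift, mProj]

lemma mProj_smul {k : ℂ} (hk : k ≠ 0) (p q : ℂ) : mProj (k * p) (k * q) = mProj p q := by
  unfold mProj
  by_cases hq : q = 0
  · simp [hq]
  · rw [if_neg hq, if_neg (by exact mul_ne_zero hk hq), mul_div_mul_left _ _ hk]

lemma lift_ne_zero (z : Option ℂ) : lift z ≠ (0, 0) := by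
  cases z <;> simp [lift]

lemma lift_mProj (p q : ℂ) (h : ¬(p = 0 ∧ q = 0)) :
    ∃ k : ℂ, k ≠ 0 ∧ (lift (mProj p q)).1 = k * p ∧ (lift (mProj p q)).2 = k * q := by
  by_cases hq : q = 0
  · have hp : p ≠ 0 := fun hp => h ⟨hp, hq⟩
    refine ⟨p⁻¹, inv_ne_zero hp, ?_, ?_⟩ <;> simp [mProj, hq, lift, inv_mul_cancel₀ hp]
  · refine ⟨q⁻¹, inv_ne_zero hq, ?_, ?_⟩ <;>
      simp [mProj, hq, lift, inv_mul_cancel₀ hq, div_eq_inv_mul]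

lemma moebius_comp (a b c d a' b' c' d' : ℂ) (h : a * d - b * c ≠ 0) (z : Option ℂ) :
    moebiusMap a' b' c' d' (moebiusMap a b c d z)
      = moebiusMap (a' * a + b' * c) (a' * b + b' * d)
          (c' * a + d' * c) (c' * b + d' * d) z := by
  set z1 := (lift z).1 with hz1
  set z2 := (lift z).2 with hz2
  have hnz : ¬((a * z1 + b * z2) = 0 ∧ (c * z1 + d * z2) = 0) := by
    rintro ⟨h1, h2⟩
    have e1 : (a * d - b * c) * z1 = d * (a * z1 + b * z2) - b * (c * z1 + d * z2) := by ring
    have e2 : (a * d - b * c) * z2 = a * (c * z1 + d * z2) - c * (a * z1 + b * z2) := by ring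
    have hz1' : z1 = 0 := by
      have := e1; rw [h1, h2] at this; simpa [h] using this
    have hz2' : z2 = 0 := by
      have := e2; rw [h1, h2] at this; simpa [h] using this
    exact lift_ne_zero z (Prod.ext hz1' hz2')
  obtain ⟨k, hk, hk1, hk2⟩ := lift_mProj _ _ hnz
  rw [moebiusMap_eq a b c d z, moebiusMap_eq a' b' c' d', moebiusMap_eq, hk1, hk2, ← hz1, ← hz2]
  have : ∀ P Q : ℂ, a' * (k * P) + b' * (k * Q) = k * (a' * P + b' * Q) := by intros; ring
  rw [this, show c' * (k * (a * z1 + b * z2)) + d' * (k * (c * z1 + d * z2))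
      = k * (c' * (a * z1 + b * z2) + d' * (c * z1 + d * z2)) by ring, mProj_smul hk]
  congr 1 <;> ring

lemma moebiusMap_id (k : ℂ) (hk : k ≠ 0) (z : Option ℂ) : moebiusMap k 0 0 k z = z := by
  cases z with
  | none => simp [moebiusMap]
  | some w => simp [moebiusMap, hk, mul_comm, mul_div_assoc, div_self hk]

lemma moebius_inverse {φ : Option ℂ → Option ℂ} (h : IsMoebius φ) :
    ∃ ψ, IsMoebius ψ ∧ (∀ z, ψ (φ z) = z) ∧ (∀ z, φ (ψ z) = z) := by
  obtain ⟨a, b, c, d, hdet, rfl⟩ := h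
  refine ⟨moebiusMap d (-b) (-c) a, ⟨d, -b, -c, a,
    fun hc => hdet (by linear_combination hc), rfl⟩, ?_, ?_⟩
  · intro z
    rw [moebius_comp a b c d d (-b) (-c) a hdet z]
    have e1 : d * a + -b * c = a * d - b * c := by ring
    have e2 : d * b + -b * d = 0 := by ring
    have e3 : -c * a + a * c = 0 := by ring
    have e4 : -c * b + a * d = a * d - b * c := by ring
    rw [e1, e2, e3, e4]; exact moebiusMap_id _ hdet z
  · intro z
    rw [moebius_comp d (-b) (-c) a a b c d
      (fun hc => hdet (by linear_combination hc)) z]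
    have e1 : a * d + b * -c = a * d - b * c := by ring
    have e2 : a * -b + b * a = 0 := by ring
    have e3 : c * d + d * -c = 0 := by ring
    have e4 : c * -b + d * a = a * d - b * c := by ring
    rw [e1, e2, e3, e4]; exact moebiusMap_id _ hdet z

lemma moebius_injective {φ : Option ℂ → Option ℂ} (h : IsMoebius φ) :
    Function.Injective φ := by
  obtain ⟨ψ, _, hl, _⟩ := moebius_inverse h
  exact Function.LeftInverse.injective hl

lemma moebius_isMoebius_comp {φ ψ : Option ℂ → Option ℂ} (hφ : IsMoebius φ) (hψ : IsMoebius ψ) :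
    IsMoebius (fun z => φ (ψ z)) := by
  obtain ⟨a', b', c', d', hdet', rfl⟩ := hφ
  obtain ⟨a, b, c, d, hdet, rfl⟩ := hψ
  refine ⟨a' * a + b' * c, a' * b + b' * d, c' * a + d' * c, c' * b + d' * d, ?_, ?_⟩
  · have : (a' * a + b' * c) * (c' * b + d' * d) - (a' * b + b' * d) * (c' * a + d' * c)
        = (a' * d' - b' * c') * (a * d - b * c) := by ring
    rw [this]; exact mul_ne_zero hdet' hdet
  · funext z; exact moebius_comp a b c d a' b' c' d' hdet z

lemma lift_cross_ne {p q : Option ℂ} (h : p ≠ q) :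
    (lift p).1 * (lift q).2 - (lift p).2 * (lift q).1 ≠ 0 := by
  cases p with
  | none => cases q with
    | none => exact absurd rfl h
    | some w => simp [lift]
  | some w => cases q with
    | none => simp [lift]
    | some w' => simpa [lift, sub_eq_zero] using fun hw => h (by rw [hw])

lemma exists_moebius_three {p q r : Option ℂ} (hpq : p ≠ q) (hpr : p ≠ r) (hqr : q ≠ r) :
    ∃ σ, IsMoebius σ ∧ σ p = some 0 ∧ σ q = some 1 ∧ σ r = none := by
  set p1 := (lift p).1; set p2 := (lift p).2
  set q1 := (lift q).1; set q2 := (lift q).2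
  set r1 := (lift r).1; set r2 := (lift r).2
  have hα : p2 * q1 - p1 * q2 ≠ 0 := by
    have := lift_cross_ne hpq; intro hc; apply this; linear_combination -hc
  have hβ : r2 * q1 - r1 * q2 ≠ 0 := by
    have := lift_cross_ne hqr.symm; intro hc; apply this; linear_combination -hc
  have hγ : p1 * r2 - p2 * r1 ≠ 0 := by
    have := lift_cross_ne hpr; intro hc; apply this; linear_combination hc
  set α := p2 * q1 + (-p1) * q2 with hαdef
  set β := r2 * q1 + (-r1) * q2 with hβdef
  have hα' : α ≠ 0 := by rw [hαdef]; intro hc; apply hα; linear_combination hc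
  have hβ' : β ≠ 0 := by rw [hβdef]; intro hc; apply hβ; linear_combination hc
  refine ⟨moebiusMap (β * p2) (β * (-p1)) (α * r2) (α * (-r1)),
    ⟨_, _, _, _, ?_, rfl⟩, ?_, ?_, ?_⟩
  · have : β * p2 * (α * (-r1)) - β * (-p1) * (α * r2) = α * β * (p1 * r2 - p2 * r1) := by ring
    rw [this]; exact mul_ne_zero (mul_ne_zero hα' hβ') hγ
  · rw [moebiusMap_eq]
    have e1 : β * p2 * p1 + β * (-p1) * p2 = 0 := by ring
    have e2 : α * r2 * p1 + α * (-r1) * p2 = α * (r2 * p1 - r1 * p2) := by ring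
    rw [e1, e2, mProj]
    have : α * (r2 * p1 - r1 * p2) ≠ 0 := by
      apply mul_ne_zero hα'; intro hc; apply hγ; linear_combination hc
    rw [if_neg this, zero_div]
  · rw [moebiusMap_eq]
    have e1 : β * p2 * q1 + β * (-p1) * q2 = β * α := by rw [hαdef]; ring
    have e2 : α * r2 * q1 + α * (-r1) * q2 = α * β := by rw [hβdef]; ring
    rw [e1, e2, mProj, if_neg (mul_ne_zero hα' hβ'), mul_comm,
      div_self (mul_ne_zero hα' hβ')]
  · rw [moebiusMap_eq]
    have e2 : α * r2 * r1 + α * (-r1) * r2 = 0 := by ring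
    rw [e2, mProj, if_pos rfl]

/-! ### Combinatorial layer -/

variable {V : Type*} [DecidableEq V] {G : SimpleGraph V}

/-- `Conn G v p q` : there is a walk from `p` to `q` avoiding `v`. -/
def Conn (G : SimpleGraph V) (v p q : V) : Prop := ∃ w : G.Walk p q, v ∉ w.support

lemma conn_branch {v u w : V} : w ∈ Branch G v u ↔ Conn G v u w := Iff.rfl

def thePath (ht : G.IsTree) (u v : V) : G.Walk u v := (ht.existsUnique_path u v).choose

lemma thePath_isPath (ht : G.IsTree) (u v : V) : (thePath ht u v).IsPath :=
  (ht.existsUnique_path u v).choose_spec.1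

lemma path_eq (ht : G.IsTree) {u v : V} {p : G.Walk u v} (hp : p.IsPath) :
    p = thePath ht u v :=
  (ht.existsUnique_path u v).choose_spec.2 p hp

lemma conn_iff (ht : G.IsTree) {v p q : V} :
    Conn G v p q ↔ v ∉ (thePath ht p q).support := by
  constructor
  · rintro ⟨w, hw⟩
    have h1 : ((w.toPath : G.Walk p q)) = thePath ht p q := path_eq ht w.toPath.2
    rw [← h1]
    exact fun hc => hw (Walk.support_toPath_subset w hc)
  · intro h; exact ⟨thePath ht p q, h⟩

lemma conn_refl {v p : V} (h : p ≠ v) : Conn G v p p := ⟨Walk.nil, by simpa using h.symm⟩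

lemma conn_symm {v p q : V} (h : Conn G v p q) : Conn G v q p := by
  obtain ⟨w, hw⟩ := h
  exact ⟨w.reverse, by simpa [Walk.support_reverse] using hw⟩

lemma conn_trans {v p q r : V} (h1 : Conn G v p q) (h2 : Conn G v q r) : Conn G v p r := by
  obtain ⟨w1, hw1⟩ := h1; obtain ⟨w2, hw2⟩ := h2
  exact ⟨w1.append w2, by
    rw [Walk.mem_support_append_iff]; rintro (h | h) <;> [exact hw1 h; exact hw2 h]⟩

lemma conn_ne_left {v p q : V} (h : Conn G v p q) : p ≠ v := by
  obtain ⟨w, hw⟩ := h; exact fun hc => hw (hc ▸ w.start_mem_support)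

lemma conn_ne_right {v p q : V} (h : Conn G v p q) : q ≠ v := by
  obtain ⟨w, hw⟩ := h; exact fun hc => hw (hc ▸ w.end_mem_support)

/-- If `v` lies on the path from `z` to `w` (and `v ≠ w`), then `w` is not on the
path from `z` to `v`. -/
lemma conn_of_not_conn (ht : G.IsTree) {v w z : V} (hvw : v ≠ w)
    (h : ¬ Conn G v z w) : Conn G w z v := by
  rw [conn_iff ht] at h
  push_neg at h
  have hzw : z ≠ w := by
    rintro rfl
    have h0 : (Walk.nil : G.Walk z z) = thePath ht z z := path_eq ht (by simp)
    rw [← h0] at h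
    simp at h
    exact hvw h
  set p := thePath ht z w with hp
  have hpp := thePath_isPath ht z w
  have htake : (p.takeUntil v h).IsPath := hpp.takeUntil h
  have heq : p.takeUntil v h = thePath ht z v := path_eq ht htake
  rw [conn_iff ht, ← heq]
  intro hw
  -- w in support of takeUntil and also in tail of dropUntil: contradicts nodup
  have hspec := p.take_spec h
  have hnodup : p.support.Nodup := hpp.2
  rw [← hspec, Walk.support_append] at hnodup
  rw [List.nodup_append] at hnodup
  refine hnodup.2.2 w hw w ?_ rfl
  have hwdrop : w ∈ (p.dropUntil v h).support := Walk.end_mem_support _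
  rw [Walk.support_eq_cons, List.mem_cons] at hwdrop
  rcases hwdrop with h1 | h1
  · exact absurd h1.symm hvw
  · exact h1

lemma adj_not_both (ht : G.IsTree) {v w z : V} (hadj : G.Adj v w)
    (h1 : Conn G v z w) (h2 : Conn G w z v) : False := by
  rw [conn_iff ht] at h1 h2
  set p := thePath ht z w with hp
  have hpp := thePath_isPath ht z w
  have hq : (p.append (Walk.cons hadj.symm Walk.nil)).IsPath := by
    rw [Walk.isPath_def, Walk.support_append]
    rw [List.nodup_append]
    refine ⟨hpp.2, by simp [hadj.ne], ?_⟩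
    intro x hx y hx' hxy; subst hxy
    simp at hx'
    subst hx'
    exact h1 hx
  have heq := path_eq ht hq
  apply h2
  rw [← heq, Walk.mem_support_append_iff]
  left; exact Walk.end_mem_support _

lemma adj_branches_disjoint (ht : G.IsTree) {v u1 u2 : V} (h1 : G.Adj v u1)
    (h2 : G.Adj v u2) (h12 : u1 ≠ u2) : ¬ Conn G v u1 u2 := by
  rintro ⟨w, hw⟩
  have hpath : ((w.toPath : G.Walk u1 u2)).IsPath := w.toPath.2
  have havoid : v ∉ (w.toPath : G.Walk u1 u2).support :=
    fun hc => hw (Walk.support_toPath_subset w hc)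
  have hq : (Walk.cons h1.symm (Walk.cons h2 Walk.nil) : G.Walk u1 u2).IsPath := by
    rw [Walk.isPath_def]
    simp [h1.ne', h2.ne, h12]
  have e12 : (w.toPath : G.Walk u1 u2) = Walk.cons h1.symm (Walk.cons h2 Walk.nil) :=
    (path_eq ht hpath).trans (path_eq ht hq).symm
  rw [e12] at havoid
  simp at havoid


/-- First place where a walk meets a set. -/
lemma exists_first_hit {s b : V} (w : G.Walk s b) (S : Set V) (hb : b ∈ S) :
    ∃ c, c ∈ S ∧ ∃ (w1 : G.Walk s c) (w2 : G.Walk c b),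
      (∀ d ∈ w1.support, d ∈ S → d = c) ∧ w1.append w2 = w := by
  induction w with
  | nil => exact ⟨_, hb, Walk.nil, Walk.nil, by simp, rfl⟩
  | @cons u u' b h rest ih =>
    by_cases hu : u ∈ S
    · exact ⟨u, hu, Walk.nil, Walk.cons h rest, by simp, rfl⟩
    · obtain ⟨c, hc, w1, w2, hfirst, happ⟩ := ih hb
      refine ⟨c, hc, Walk.cons h w1, w2, ?_, by rw [Walk.cons_append, happ]⟩
      intro d hd hdS
      rw [Walk.support_cons, List.mem_cons] at hd
      rcases hd with hd | hd
      · exact absurd (hd ▸ hdS) hu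
      · exact hfirst d hd hdS

/-- An interior vertex of a path has two distinct neighbours. -/
lemma two_neighbors {s t c : V} (w : G.Walk s t) (hw : w.IsPath) (hc : c ∈ w.support)
    (hs : c ≠ s) (ht : c ≠ t) : ∃ n1 n2, n1 ≠ n2 ∧ G.Adj c n1 ∧ G.Adj c n2 := by
  induction w with
  | nil => simp at hc; exact absurd hc hs
  | @cons u u' b h rest ih =>
    rw [Walk.support_cons, List.mem_cons] at hc
    rcases hc with hc | hc
    · exact absurd hc hs
    · by_cases hcu : c = u'
      · subst hcu
        cases rest with
        | nil => exact absurd rfl ht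
        | @cons _ u'' _ h2 rest2 =>
          refine ⟨u, u'', ?_, h.symm, h2⟩
          intro hcontra
          have hnodup := hw
          rw [Walk.cons_isPath_iff] at hnodup
          apply hnodup.2
          rw [hcontra, Walk.support_cons]
          right
          exact Walk.start_mem_support rest2
      · exact ih hw.of_cons hc hcu ht

variable [Finite V] {X : Type*} {m : X → V} {a : V → X → Option ℂ}

/-- A leaf on a path must be an endpoint. -/
lemma leaf_endpoint (hT : SphereTree X V G m a) {s t c : V} (w : G.Walk s t)
    (hw : w.IsPath) (hc : c ∈ w.support) (hcm : c ∈ Set.range m) : c = s ∨ c = t := by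
  by_contra hcon
  push_neg at hcon
  obtain ⟨n1, n2, h12, hn1, hn2⟩ := two_neighbors w hw hc hcon.1 hcon.2
  have h1 : (G.neighborSet c).ncard = 1 := (hT.marked.leaf_iff c).2 hcm
  have hsub : ({n1, n2} : Set V) ⊆ G.neighborSet c := by
    rintro x (rfl | rfl) <;> assumption
  have := Set.ncard_le_ncard hsub (Set.toFinite _)
  rw [Set.ncard_pair h12, h1] at this
  omega

lemma branch_subset (ht : G.IsTree) {v u z w : V} (hvu : G.Adj v u) (huz : G.Adj u z)
    (hzv : z ≠ v) (h : Conn G u z w) : Conn G v u w := by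
  obtain ⟨w', hw'⟩ := h
  have hv : v ∉ w'.support := by
    intro hv
    have : Conn G u z v := ⟨w'.takeUntil v hv, fun hc => hw' (Walk.support_takeUntil_subset _ _ hc)⟩
    exact adj_branches_disjoint ht huz hvu.symm hzv this
  exact ⟨Walk.cons huz w', by
    rw [Walk.support_cons, List.mem_cons]
    rintro (hc | hc)
    · exact hvu.ne' hc.symm
    · exact hv hc⟩

lemma branch_marked (hT : SphereTree X V G m a) {v u : V} (hadj : G.Adj v u) :
    ∃ x, Conn G v u (m x) := by
  have ht := hT.marked.tree
  obtain ⟨n, hn⟩ : ∃ n, (Branch G v u).ncard ≤ n := ⟨_, le_refl _⟩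
  induction n generalizing v u with
  | zero =>
    exfalso
    have : u ∈ Branch G v u := conn_refl hadj.ne'
    have := (Set.ncard_pos (Set.toFinite _)).2 ⟨u, this⟩
    omega
  | succ n ih =>
    by_cases hu : u ∈ Set.range m
    · obtain ⟨x, rfl⟩ := hu
      exact ⟨x, conn_refl hadj.ne'⟩
    · have h3 := hT.marked.stable u hu
      have : ∃ z ∈ G.neighborSet u, z ≠ v := by
        by_contra hcon
        push_neg at hcon
        have hsub : G.neighborSet u ⊆ ({v} : Set V) := fun z hz => hcon z hz
        have h1 : (G.neighborSet u).ncard ≤ ({v} : Set V).ncard :=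
          Set.ncard_le_ncard hsub (Set.toFinite _)
        rw [Set.ncard_singleton] at h1
        omega
      obtain ⟨z, hz, hzv⟩ := this
      have huz : G.Adj u z := hz
      have hss : Branch G u z ⊂ Branch G v u := by
        constructor
        · intro w hw
          exact branch_subset ht hadj huz hzv hw
        · intro hcon
          have hu1 : u ∈ Branch G v u := conn_refl hadj.ne'
          have := hcon hu1
          exact conn_ne_right this rfl
      have hcard : (Branch G u z).ncard < (Branch G v u).ncard :=
        Set.ncard_lt_ncard hss (Set.toFinite _)
      obtain ⟨x, hx⟩ := ih huz (by omega)
      exact ⟨x, branch_subset ht hadj huz hzv hx⟩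

lemma internal_sep (hT : SphereTree X V G m a) {v : V} (hv : v ∉ Set.range m) :
    ∃ x0 x1 x2, x0 ≠ x1 ∧ x0 ≠ x2 ∧ x1 ≠ x2 ∧ ¬ Conn G v (m x0) (m x1) ∧
      ¬ Conn G v (m x0) (m x2) ∧ ¬ Conn G v (m x1) (m x2) := by
  have ht := hT.marked.tree
  have h3 := hT.marked.stable v hv
  -- three distinct neighbours
  obtain ⟨u0, hu0⟩ : (G.neighborSet v).Nonempty :=
    (Set.ncard_pos (Set.toFinite _)).1 (by omega)
  obtain ⟨u1, hu1, hu10⟩ := Set.exists_ne_of_one_lt_ncard (show 1 < (G.neighborSet v).ncard by omega) u0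
  have hd2 : 1 ≤ (G.neighborSet v \ {u0, u1}).ncard := by
    have := Set.ncard_le_ncard_diff_add_ncard (G.neighborSet v) {u0, u1} (Set.toFinite _)
    have h2 : ({u0, u1} : Set V).ncard ≤ 2 := by
      apply le_trans (Set.ncard_insert_le _ _); simp [Set.ncard_singleton]
    omega
  obtain ⟨u2, hu2⟩ := (Set.ncard_pos (Set.toFinite _)).1 (by omega : 0 < (G.neighborSet v \ {u0, u1}).ncard)
  have hu2n : u2 ∈ G.neighborSet v := hu2.1
  have hu20 : u2 ≠ u0 := by intro h; exact hu2.2 (by simp [h])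
  have hu21 : u2 ≠ u1 := by intro h; exact hu2.2 (by simp [h])
  obtain ⟨x0, hx0⟩ := branch_marked hT (hu0 : G.Adj v u0)
  obtain ⟨x1, hx1⟩ := branch_marked hT (hu1 : G.Adj v u1)
  obtain ⟨x2, hx2⟩ := branch_marked hT (hu2n : G.Adj v u2)
  have key : ∀ (ua ub : V) (xa xb : X), G.Adj v ua → G.Adj v ub → ua ≠ ub →
      Conn G v ua (m xa) → Conn G v ub (m xb) → ¬ Conn G v (m xa) (m xb) := by
    intro ua ub xa xb ha hb hab hca hcb hcon
    exact adj_branches_disjoint ht ha hb hab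
      (conn_trans (conn_trans hca hcon) (conn_symm hcb))
  have n01 := key u0 u1 x0 x1 hu0 hu1 (Ne.symm hu10) hx0 hx1
  have n02 := key u0 u2 x0 x2 hu0 hu2n (Ne.symm hu20) hx0 hx2
  have n12 := key u1 u2 x1 x2 hu1 hu2n (Ne.symm hu21) hx1 hx2
  refine ⟨x0, x1, x2, ?_, ?_, ?_, n01, n02, n12⟩
  · rintro rfl; exact n01 (conn_refl (conn_ne_right hx0))
  · rintro rfl; exact n02 (conn_refl (conn_ne_right hx0))
  · rintro rfl; exact n12 (conn_refl (conn_ne_right hx1))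

lemma sep_unique (ht : G.IsTree) {v w p0 p1 p2 : V} (hvw : v ≠ w)
    (hv01 : ¬ Conn G v p0 p1) (hv02 : ¬ Conn G v p0 p2) (hv12 : ¬ Conn G v p1 p2)
    (hw01 : ¬ Conn G w p0 p1) (hw02 : ¬ Conn G w p0 p2) (hw12 : ¬ Conn G w p1 p2) :
    False := by
  have key : ∀ pa pb : V, ¬ Conn G w pa pb → ¬ Conn G v pa w → ¬ Conn G v pb w → False := by
    intro pa pb hwab hva hvb
    have ha := conn_of_not_conn ht hvw hva
    have hb := conn_of_not_conn ht hvw hvb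
    exact hwab (conn_trans ha (conn_symm hb))
  by_cases c0 : Conn G v p0 w
  · by_cases c1 : Conn G v p1 w
    · exact hv01 (conn_trans c0 (conn_symm c1))
    · by_cases c2 : Conn G v p2 w
      · exact hv02 (conn_trans c0 (conn_symm c2))
      · exact key p1 p2 hw12 c1 c2
  · by_cases c1 : Conn G v p1 w
    · by_cases c2 : Conn G v p2 w
      · exact hv12 (conn_trans c1 (conn_symm c2))
      · exact key p0 p2 hw02 c0 c2
    · exact key p0 p1 hw01 c0 c1

lemma not_conn_symm {v p q : V} (h : ¬ Conn G v p q) : ¬ Conn G v q p :=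
  fun hc => h (conn_symm hc)

/-- Existence of a separating (median) vertex for any triple of marked points. -/
lemma median (hT : SphereTree X V G m a) {x0 x1 x2 : X}
    (h01 : x0 ≠ x1) (h02 : x0 ≠ x2) (h12 : x1 ≠ x2) :
    ∃ v, v ∉ Set.range m ∧ ¬ Conn G v (m x0) (m x1) ∧ ¬ Conn G v (m x0) (m x2) ∧
      ¬ Conn G v (m x1) (m x2) := by
  have ht := hT.marked.tree
  set p := thePath ht (m x0) (m x1) with hpdef
  have hpp := thePath_isPath ht (m x0) (m x1)
  set q := thePath ht (m x2) (m x0) with hqdef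
  have hqq := thePath_isPath ht (m x2) (m x0)
  obtain ⟨c, hcp, q1, q2, hfirst, happ⟩ :=
    exists_first_hit q {d | d ∈ p.support} p.start_mem_support
  have hcp : c ∈ p.support := hcp
  have hq1path : q1.IsPath := by
    have h5 : (q1.append q2).IsPath := by rw [happ]; exact hqq
    exact h5.of_append_left
  have hdrop : (p.dropUntil c hcp).IsPath := hpp.dropUntil hcp
  have hr : (q1.append (p.dropUntil c hcp)).IsPath := by
    rw [Walk.isPath_def, Walk.support_append, List.nodup_append]
    refine ⟨hq1path.2, (List.tail_sublist _).nodup hdrop.2, ?_⟩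
    intro d hd1 d' hd2 hdd; subst hdd
    have hd3 : d ∈ (p.dropUntil c hcp).support := List.mem_of_mem_tail hd2
    have hd4 : d ∈ p.support := Walk.support_dropUntil_subset p hcp hd3
    have hdc : d = c := hfirst d hd1 hd4
    subst hdc
    have := hdrop.2
    rw [Walk.support_eq_cons] at this
    exact (List.nodup_cons.mp this).1 hd2
  have heqr : q1.append (p.dropUntil c hcp) = thePath ht (m x2) (m x1) := path_eq ht hr
  have hcq : c ∈ q.support := by
    rw [← happ, Walk.mem_support_append_iff]; left; exact Walk.end_mem_support _
  have hcr : c ∈ (thePath ht (m x2) (m x1)).support := by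
    rw [← heqr, Walk.mem_support_append_iff]; left; exact Walk.end_mem_support _
  have hn01 : ¬ Conn G c (m x0) (m x1) := by rw [conn_iff ht]; simpa using hcp
  have hn20 : ¬ Conn G c (m x2) (m x0) := by rw [conn_iff ht]; simpa using hcq
  have hn21 : ¬ Conn G c (m x2) (m x1) := by rw [conn_iff ht]; simpa using hcr
  refine ⟨c, ?_, hn01, not_conn_symm hn20, not_conn_symm hn21⟩
  intro hcm
  have e1 := leaf_endpoint hT p hpp hcp hcm
  have e2 := leaf_endpoint hT q hqq hcq hcm
  have e3 := leaf_endpoint hT _ (thePath_isPath ht (m x2) (m x1)) hcr hcm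
  have inj := hT.marked.inj
  rcases e1 with e1 | e1
  · rcases e3 with e3 | e3
    · exact h02 (inj (e1.symm.trans e3))
    · exact h01 (inj (e1.symm.trans e3))
  · rcases e2 with e2 | e2
    · exact h12 (inj (e2.symm.trans e1).symm)
    · exact h01 (inj (e2.symm.trans e1))

lemma sameBranch_iff (ht : G.IsTree) {v p q : V} (hp : p ≠ v) :
    SameBranch G v p q ↔ Conn G v p q := by
  constructor
  · rintro ⟨u, hu, h1, h2⟩
    exact conn_trans (conn_symm h1) h2
  · intro h
    have hnn : ¬ (thePath ht v p).Nil := Walk.not_nil_of_ne (Ne.symm hp)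
    obtain ⟨u, hadj, rest, heq⟩ := Walk.not_nil_iff.mp hnn
    have hpath := thePath_isPath ht v p
    rw [heq, Walk.cons_isPath_iff] at hpath
    have h1 : Conn G v u p := ⟨rest, hpath.2⟩
    exact ⟨u, hadj, h1, conn_trans h1 h⟩

lemma aclass (hT : SphereTree X V G m a) {v : V} (hv : v ∉ Set.range m) (x y : X) :
    a v x = a v y ↔ Conn G v (m x) (m y) := by
  rw [hT.compat v hv x y, sameBranch_iff hT.marked.tree (fun hc => hv ⟨x, hc⟩)]

lemma adj_leaf_conn (hT : SphereTree X V G m a) {v : V} {x : X} (hv : v ∉ Set.range m) :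
    G.Adj v (m x) ↔ ∀ y, Conn G v (m x) (m y) → y = x := by
  have ht := hT.marked.tree
  constructor
  · intro hadj y hcy
    have hns : G.neighborSet (m x) = {v} := by
      obtain ⟨e, he⟩ := Set.ncard_eq_one.mp ((hT.marked.leaf_iff (m x)).2 ⟨x, rfl⟩)
      have hve : v ∈ G.neighborSet (m x) := hadj.symm
      rw [he] at hve ⊢
      simp at hve; rw [hve]
    have claim : ∀ (wv : V) (W : G.Walk (m x) wv), v ∉ W.support → wv = m x := by
      intro wv W
      cases W with
      | nil => intro _; rfl
      | cons h rest =>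
        intro hsup
        exfalso
        have : _ ∈ G.neighborSet (m x) := h
        rw [hns] at this
        simp at this
        apply hsup
        rw [Walk.support_cons, List.mem_cons]
        right
        rw [← this]
        exact Walk.start_mem_support rest
    obtain ⟨W, hW⟩ := hcy
    exact hT.marked.inj (claim (m y) W hW)
  · intro h
    by_contra hnadj
    have hvx : v ≠ m x := fun hc => hv ⟨x, hc.symm⟩
    have hnn : ¬ (thePath ht v (m x)).Nil := Walk.not_nil_of_ne hvx
    obtain ⟨u, hadj, rest, heq⟩ := Walk.not_nil_iff.mp hnn
    have hpath := thePath_isPath ht v (m x)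
    have hpath' := hpath
    rw [heq, Walk.cons_isPath_iff] at hpath'
    have hconn_u_mx : Conn G v u (m x) := ⟨rest, hpath'.2⟩
    have hu_mx : u ≠ m x := by
      rintro rfl; exact hnadj hadj
    have humem : u ∈ (thePath ht v (m x)).support := by
      rw [heq, Walk.support_cons, List.mem_cons]
      right; exact Walk.start_mem_support rest
    have hu_range : u ∉ Set.range m := by
      intro hcm
      rcases leaf_endpoint hT _ hpath humem hcm with h' | h'
      · exact hadj.ne' h'
      · exact hu_mx h'
    have h3 := hT.marked.stable u hu_range
    have hd2 : 2 ≤ (G.neighborSet u \ {v}).ncard := by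
      have := Set.ncard_le_ncard_diff_add_ncard (G.neighborSet u) {v} (Set.toFinite _)
      rw [Set.ncard_singleton] at this
      omega
    obtain ⟨z1, hz1⟩ := (Set.ncard_pos (Set.toFinite _)).1
      (show 0 < (G.neighborSet u \ {v}).ncard by omega)
    obtain ⟨z2, hz2, hz21⟩ := Set.exists_ne_of_one_lt_ncard
      (show 1 < (G.neighborSet u \ {v}).ncard by omega) z1
    have hz1a : G.Adj u z1 := hz1.1
    have hz2a : G.Adj u z2 := hz2.1
    have hz1v : z1 ≠ v := by intro hc; exact hz1.2 (by simp [hc])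
    have hz2v : z2 ≠ v := by intro hc; exact hz2.2 (by simp [hc])
    obtain ⟨y1, hy1⟩ := branch_marked hT hz1a
    obtain ⟨y2, hy2⟩ := branch_marked hT hz2a
    have hy12 : y1 ≠ y2 := by
      rintro rfl
      exact adj_branches_disjoint ht hz1a hz2a (Ne.symm hz21)
        (conn_trans hy1 (conn_symm hy2))
    have ht1 : Conn G v u (m y1) := branch_subset ht hadj hz1a hz1v hy1
    have ht2 : Conn G v u (m y2) := branch_subset ht hadj hz2a hz2v hy2
    have e1 := h y1 (conn_trans (conn_symm hconn_u_mx) ht1)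
    have e2 := h y2 (conn_trans (conn_symm hconn_u_mx) ht2)
    exact hy12 (e1.trans e2.symm)

lemma adj_internal_conn1 (hT : SphereTree X V G m a) {v w : V} (hadj : G.Adj v w) :
    ∃ y z : X, ∀ x, Conn G v (m x) (m y) ↔ ¬ Conn G w (m x) (m z) := by
  have ht := hT.marked.tree
  obtain ⟨y, hy⟩ := branch_marked hT hadj
  obtain ⟨z, hz⟩ := branch_marked hT hadj.symm
  refine ⟨y, z, fun x => ⟨?_, ?_⟩⟩
  · intro h1 hcon
    exact adj_not_both ht hadj (conn_trans h1 (conn_symm hy))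
      (conn_trans hcon (conn_symm hz))
  · intro h2
    have hnv : ¬ Conn G w (m x) v := fun hc => h2 (conn_trans hc hz)
    exact conn_trans (conn_of_not_conn ht hadj.ne' hnv) hy

lemma adj_internal_conn2 (hT : SphereTree X V G m a) {v w : V} {y z : X}
    (hv : v ∉ Set.range m) (hw : w ∉ Set.range m)
    (hyz : ∀ x, Conn G v (m x) (m y) ↔ ¬ Conn G w (m x) (m z)) : G.Adj v w := by
  have ht := hT.marked.tree
  have hvw : v ≠ w := by
    rintro rfl
    obtain ⟨x0, x1, x2, d01, d02, d12, n01, n02, n12⟩ := internal_sep hT hv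
    have pick : ∀ xa xb : X, ¬ Conn G v (m xa) (m xb) →
        (Conn G v (m xa) (m y) ↔ Conn G v (m xb) (m y)) → False := by
      intro xa xb hnab hcon
      by_cases hca : Conn G v (m xa) (m y)
      · exact hnab (conn_trans hca (conn_symm (hcon.mp hca)))
      · have hza : Conn G v (m xa) (m z) :=
          not_not.mp (mt (hyz xa).mpr hca)
        have hzb : Conn G v (m xb) (m z) :=
          not_not.mp (mt (hyz xb).mpr (fun hcb => hca (hcon.mpr hcb)))
        exact hnab (conn_trans hza (conn_symm hzb))
    by_cases c0 : Conn G v (m x0) (m y) <;> by_cases c1 : Conn G v (m x1) (m y)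
    · exact pick x0 x1 n01 (iff_of_true c0 c1)
    · by_cases c2 : Conn G v (m x2) (m y)
      · exact pick x0 x2 n02 (iff_of_true c0 c2)
      · exact pick x1 x2 n12 (iff_of_false c1 c2)
    · by_cases c2 : Conn G v (m x2) (m y)
      · exact pick x1 x2 n12 (iff_of_true c1 c2)
      · exact pick x0 x2 n02 (iff_of_false c0 c2)
    · exact pick x0 x1 n01 (iff_of_false c0 c1)
  by_contra hnadj
  have hnn : ¬ (thePath ht v w).Nil := Walk.not_nil_of_ne hvw
  obtain ⟨u, h1, rest, heq⟩ := Walk.not_nil_iff.mp hnn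
  have hpath := thePath_isPath ht v w
  have hpath' := hpath
  rw [heq, Walk.cons_isPath_iff] at hpath'
  have hvrest : v ∉ rest.support := hpath'.2
  have hu_w : u ≠ w := by rintro rfl; exact hnadj h1
  have hnn2 : ¬ rest.Nil := Walk.not_nil_of_ne hu_w
  obtain ⟨u2, h2, rest2, heq2⟩ := Walk.not_nil_iff.mp hnn2
  have hrestpath := hpath'.1
  have hrestpath' := hrestpath
  rw [heq2, Walk.cons_isPath_iff] at hrestpath'
  have hurest2 : u ∉ rest2.support := hrestpath'.2
  have hConn_vuw : Conn G v u w := ⟨rest, hvrest⟩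
  have hConn_wuv : Conn G w u v := by
    refine ⟨(Walk.cons h1 Walk.nil).reverse, ?_⟩
    rw [Walk.support_reverse]
    simp only [Walk.support_cons, Walk.support_nil, List.reverse_cons, List.mem_reverse]
    intro hc
    simp at hc
    rcases hc with hc | hc
    · exact hu_w hc.symm
    · exact hvw hc.symm
  have humem : u ∈ (thePath ht v w).support := by
    rw [heq, Walk.support_cons, List.mem_cons]
    right; exact Walk.start_mem_support rest
  have hu_range : u ∉ Set.range m := by
    intro hcm
    rcases leaf_endpoint hT _ hpath humem hcm with h' | h'
    · exact h1.ne' h'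
    · exact hu_w h'
  have h3 := hT.marked.stable u hu_range
  have hd1 : 1 ≤ (G.neighborSet u \ {v, u2}).ncard := by
    have := Set.ncard_le_ncard_diff_add_ncard (G.neighborSet u) {v, u2} (Set.toFinite _)
    have h2' : ({v, u2} : Set V).ncard ≤ 2 := by
      apply le_trans (Set.ncard_insert_le _ _); simp [Set.ncard_singleton]
    omega
  obtain ⟨c, hc⟩ := (Set.ncard_pos (Set.toFinite _)).1
    (show 0 < (G.neighborSet u \ {v, u2}).ncard by omega)
  have hc_adj : G.Adj u c := hc.1
  have hcv : c ≠ v := by intro h'; exact hc.2 (by simp [h'])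
  have hcu2 : c ≠ u2 := by intro h'; exact hc.2 (by simp [h'])
  obtain ⟨xc, hxc⟩ := branch_marked hT hc_adj
  have hnc_v : ¬ Conn G u (m xc) v := fun hcc =>
    adj_branches_disjoint ht hc_adj h1.symm hcv (conn_trans hxc hcc)
  have hConn_u_u2_w : Conn G u u2 w := ⟨rest2, hurest2⟩
  have hnc_w : ¬ Conn G u (m xc) w := fun hcc =>
    adj_branches_disjoint ht hc_adj h2 hcu2
      (conn_trans hxc (conn_trans hcc (conn_symm hConn_u_u2_w)))
  have hc_vu : Conn G v (m xc) u := conn_of_not_conn ht h1.ne' hnc_v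
  have hc_wu : Conn G w (m xc) u := conn_of_not_conn ht hu_w hnc_w
  have hc_vw : Conn G v (m xc) w := conn_trans hc_vu hConn_vuw
  have hc_wv : Conn G w (m xc) v := conn_trans hc_wu hConn_wuv
  by_cases hA : Conn G v (m xc) (m y)
  · -- Case A : xc lies in the `y`-class of v
    have h_yw : Conn G v (m y) w := conn_trans (conn_symm hA) hc_vw
    have hd1' : 1 ≤ (G.neighborSet v \ {u}).ncard := by
      have := Set.ncard_le_ncard_diff_add_ncard (G.neighborSet v) {u} (Set.toFinite _)
      rw [Set.ncard_singleton] at this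
      have h3v := hT.marked.stable v hv
      omega
    obtain ⟨c2, hc2⟩ := (Set.ncard_pos (Set.toFinite _)).1
      (show 0 < (G.neighborSet v \ {u}).ncard by omega)
    have hc2adj : G.Adj v c2 := hc2.1
    have hc2u : c2 ≠ u := by intro h'; exact hc2.2 (by simp [h'])
    obtain ⟨x2, hx2⟩ := branch_marked hT hc2adj
    have hnx2w : ¬ Conn G v (m x2) w := fun hcc =>
      adj_branches_disjoint ht hc2adj h1 hc2u
        (conn_trans hx2 (conn_trans hcc (conn_symm hConn_vuw)))
    have hnx2y : ¬ Conn G v (m x2) (m y) := fun hcc => hnx2w (conn_trans hcc h_yw)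
    have hx2z : Conn G w (m x2) (m z) := not_not.mp (mt (hyz x2).mpr hnx2y)
    have hx2v : Conn G w (m x2) v := conn_of_not_conn ht hvw hnx2w
    have h_zv : Conn G w (m z) v := conn_trans (conn_symm hx2z) hx2v
    exact (hyz xc).mp hA (conn_trans hc_wv (conn_symm h_zv))
  · -- Case B : xc lies in the `z`-class of w
    have hxcz : Conn G w (m xc) (m z) := not_not.mp (mt (hyz xc).mpr hA)
    have h_zv : Conn G w (m z) v := conn_trans (conn_symm hxcz) hc_wv
    have hnn' : ¬ (thePath ht w v).Nil := Walk.not_nil_of_ne hvw.symm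
    obtain ⟨u', h1', rest', heq'⟩ := Walk.not_nil_iff.mp hnn'
    have hpathw := thePath_isPath ht w v
    rw [heq', Walk.cons_isPath_iff] at hpathw
    have hConn_w_u'_v : Conn G w u' v := ⟨rest', hpathw.2⟩
    have hd1'' : 1 ≤ (G.neighborSet w \ {u'}).ncard := by
      have := Set.ncard_le_ncard_diff_add_ncard (G.neighborSet w) {u'} (Set.toFinite _)
      rw [Set.ncard_singleton] at this
      have h3w := hT.marked.stable w hw
      omega
    obtain ⟨c2, hc2⟩ := (Set.ncard_pos (Set.toFinite _)).1
      (show 0 < (G.neighborSet w \ {u'}).ncard by omega)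
    have hc2adj : G.Adj w c2 := hc2.1
    have hc2u : c2 ≠ u' := by intro h'; exact hc2.2 (by simp [h'])
    obtain ⟨x2, hx2⟩ := branch_marked hT hc2adj
    have hnx2v : ¬ Conn G w (m x2) v := fun hcc =>
      adj_branches_disjoint ht hc2adj h1' hc2u
        (conn_trans hx2 (conn_trans hcc (conn_symm hConn_w_u'_v)))
    have hnx2z : ¬ Conn G w (m x2) (m z) := fun hcc => hnx2v (conn_trans hcc h_zv)
    have hx2y : Conn G v (m x2) (m y) := (hyz x2).mpr hnx2z
    have hx2w : Conn G v (m x2) w := conn_of_not_conn ht hvw.symm hnx2v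
    have h_yw2 : Conn G v (m y) w := conn_trans (conn_symm hx2y) hx2w
    exact hA (conn_trans hc_vw (conn_symm h_yw2))

lemma no_leaf_adj (hT : SphereTree X V G m a) [Finite X] (hX : 3 ≤ Nat.card X) (x y : X) :
    ¬ G.Adj (m x) (m y) := by
  intro hadj
  have hxy : x ≠ y := fun h => G.irrefl (h ▸ hadj)
  have h1 : 1 ≤ ((Set.univ : Set X) \ {x, y}).ncard := by
    have := Set.ncard_le_ncard_diff_add_ncard (Set.univ : Set X) {x, y} (Set.toFinite _)
    have h2 : ({x, y} : Set X).ncard ≤ 2 :=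
      le_trans (Set.ncard_insert_le _ _) (by simp)
    rw [Set.ncard_univ] at this
    omega
  obtain ⟨z, hz⟩ := (Set.ncard_pos (Set.toFinite _)).1
    (show 0 < ((Set.univ : Set X) \ {x, y}).ncard by omega)
  have hzx : z ≠ x := by intro h; exact hz.2 (by simp [h])
  have hzy : z ≠ y := by intro h; exact hz.2 (by simp [h])
  have bounce : ∀ n (s t : X) (c : V), G.Adj (m s) (m t) → ∀ W : G.Walk (m s) c,
      W.length ≤ n → c = m s ∨ c = m t := by
    intro n
    induction n with
    | zero =>
      intro s t c hst W hlen
      left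
      exact (Walk.eq_of_length_eq_zero (Nat.le_zero.mp hlen)).symm
    | succ n ih =>
      intro s t c hst W hlen
      cases W with
      | nil => left; rfl
      | @cons _ u' _ h restw =>
        have hns : G.neighborSet (m s) = {m t} := by
          obtain ⟨e, he⟩ := Set.ncard_eq_one.mp ((hT.marked.leaf_iff (m s)).2 ⟨s, rfl⟩)
          have hmt : m t ∈ G.neighborSet (m s) := hst
          rw [he] at hmt ⊢
          simp at hmt
          rw [hmt]
        have hd : u' ∈ G.neighborSet (m s) := h
        rw [hns] at hd
        simp at hd
        subst hd
        have hlen' : restw.length ≤ n := by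
          simp [Walk.length_cons] at hlen; omega
        rcases ih t s c hst.symm restw hlen' with h' | h'
        · right; exact h'
        · left; exact h'
  have hreach : G.Reachable (m x) (m z) := hT.marked.tree.isConnected.preconnected _ _
  obtain ⟨W⟩ := hreach
  rcases bounce W.length x y (m z) hadj W le_rfl with h' | h'
  · exact hzx (hT.marked.inj h')
  · exact hzy (hT.marked.inj h')

/-- The analytic key lemma: two internal vertices separating the same triple carry
Möbius-equivalent markings. -/
lemma key_phi {X V V' : Type*}
    {m : X → V} {m' : X → V'} {a : V → X → Option ℂ} {a' : V' → X → Option ℂ}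
    (hB : ∀ x0 x1 x2 x3 : X, x0 ≠ x1 → x0 ≠ x2 → x0 ≠ x3 → x1 ≠ x2 → x1 ≠ x3 →
      x2 ≠ x3 →
      ∀ v, v ∉ Set.range m → a v x0 ≠ a v x1 → a v x0 ≠ a v x2 → a v x1 ≠ a v x2 →
      ∀ v', v' ∉ Set.range m' → a' v' x0 ≠ a' v' x1 → a' v' x0 ≠ a' v' x2 →
        a' v' x1 ≠ a' v' x2 →
      ∀ σ σ' : Option ℂ → Option ℂ, IsMoebius σ → IsMoebius σ' →
        σ (a v x0) = some 0 → σ (a v x1) = some 1 → σ (a v x2) = none →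
        σ' (a' v' x0) = some 0 → σ' (a' v' x1) = some 1 → σ' (a' v' x2) = none →
        σ (a v x3) = σ' (a' v' x3))
    {v : V} {v' : V'} (hv : v ∉ Set.range m) (hv' : v' ∉ Set.range m')
    {x0 x1 x2 : X} (d01 : x0 ≠ x1) (d02 : x0 ≠ x2) (d12 : x1 ≠ x2)
    (s01 : a v x0 ≠ a v x1) (s02 : a v x0 ≠ a v x2) (s12 : a v x1 ≠ a v x2)
    (s01' : a' v' x0 ≠ a' v' x1) (s02' : a' v' x0 ≠ a' v' x2)
    (s12' : a' v' x1 ≠ a' v' x2) :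
    ∃ φ, IsMoebius φ ∧ ∀ x, a' v' x = φ (a v x) := by
  obtain ⟨σ, hσM, hσ0, hσ1, hσ2⟩ := exists_moebius_three s01 s02 s12
  obtain ⟨σ', hσ'M, hσ'0, hσ'1, hσ'2⟩ := exists_moebius_three s01' s02' s12'
  have hF : ∀ x, σ (a v x) = σ' (a' v' x) := by
    intro x
    by_cases h0 : x = x0
    · subst h0; rw [hσ0, hσ'0]
    by_cases h1 : x = x1
    · subst h1; rw [hσ1, hσ'1]
    by_cases h2 : x = x2
    · subst h2; rw [hσ2, hσ'2]
    exact hB x0 x1 x2 x d01 d02 (Ne.symm h0) d12 (Ne.symm h1) (Ne.symm h2) v hv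
      s01 s02 s12 v' hv' s01' s02' s12' σ σ' hσM hσ'M hσ0 hσ1 hσ2 hσ'0 hσ'1 hσ'2
  obtain ⟨ψ, hψM, hψl, hψr⟩ := moebius_inverse hσ'M
  refine ⟨fun zz => ψ (σ zz), moebius_isMoebius_comp hψM hσM, fun x => ?_⟩
  show a' v' x = ψ (σ (a v x))
  rw [hF x, hψl]

/-- The matching relation between internal vertices of the two trees. -/
def MRel {X V V' : Type*} (m : X → V) (m' : X → V') (a : V → X → Option ℂ)
    (a' : V' → X → Option ℂ) (v : V) (v' : V') : Prop :=
  v ∉ Set.range m ∧ v' ∉ Set.range m' ∧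
    ∃ φ, IsMoebius φ ∧ ∀ x, a' v' x = φ (a v x)

end ChartAux

open ChartAux

/-- the map `𝔅` sending the isomorphism class of a tree of spheres marked
by `X` to the collection of values `α_t(x)` over quadruples `(t, x)` of distinct elements
of `X` is injective: if the chart markings of two trees of spheres agree on all
quadruples (for all separating vertices and normalized Möbius charts), then the trees
are isomorphic as trees of spheres marked by `X`. -/
theorem chart_markings_determine_sphere_tree {X V V' : Type*} [Finite X] [Finite V]
    [Finite V'] (hX : 3 ≤ Nat.card X)
    (G : SimpleGraph V) (G' : SimpleGraph V') (m : X → V) (m' : X → V')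
    (a : V → X → Option ℂ) (a' : V' → X → Option ℂ)
    (hT : SphereTree X V G m a) (hT' : SphereTree X V' G' m' a')
    (hB : ∀ x0 x1 x2 x3 : X, x0 ≠ x1 → x0 ≠ x2 → x0 ≠ x3 → x1 ≠ x2 → x1 ≠ x3 →
      x2 ≠ x3 →
      ∀ v, v ∉ Set.range m → a v x0 ≠ a v x1 → a v x0 ≠ a v x2 → a v x1 ≠ a v x2 →
      ∀ v', v' ∉ Set.range m' → a' v' x0 ≠ a' v' x1 → a' v' x0 ≠ a' v' x2 →
        a' v' x1 ≠ a' v' x2 →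
      ∀ σ σ' : Option ℂ → Option ℂ, IsMoebius σ → IsMoebius σ' →
        σ (a v x0) = some 0 → σ (a v x1) = some 1 → σ (a v x2) = none →
        σ' (a' v' x0) = some 0 → σ' (a' v' x1) = some 1 → σ' (a' v' x2) = none →
        σ (a v x3) = σ' (a' v' x3)) :
    ∃ g : G ≃g G', (∀ x, g (m x) = m' x) ∧
      ∀ v, v ∉ Set.range m →
        ∃ φ : Option ℂ → Option ℂ, IsMoebius φ ∧ ∀ x, a' (g v) x = φ (a v x) := by
  classical
  have ht := hT.marked.tree
  have ht' := hT'.marked.tree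
  -- existence of matched partners
  have hex : ∀ v, v ∉ Set.range m → ∃ v', MRel m m' a a' v v' := by
    intro v hv
    obtain ⟨x0, x1, x2, d01, d02, d12, n01, n02, n12⟩ := internal_sep hT hv
    obtain ⟨v', hv', n01', n02', n12'⟩ := median hT' d01 d02 d12
    obtain ⟨φ, hφ, hφx⟩ := key_phi hB hv hv' d01 d02 d12
      (fun hc => n01 ((aclass hT hv _ _).mp hc))
      (fun hc => n02 ((aclass hT hv _ _).mp hc))
      (fun hc => n12 ((aclass hT hv _ _).mp hc))
      (fun hc => n01' ((aclass hT' hv' _ _).mp hc))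
      (fun hc => n02' ((aclass hT' hv' _ _).mp hc))
      (fun hc => n12' ((aclass hT' hv' _ _).mp hc))
    exact ⟨v', hv, hv', φ, hφ, hφx⟩
  have hex' : ∀ v', v' ∉ Set.range m' → ∃ v, MRel m m' a a' v v' := by
    intro v' hv'
    obtain ⟨x0, x1, x2, d01, d02, d12, n01', n02', n12'⟩ := internal_sep hT' hv'
    obtain ⟨v, hv, n01, n02, n12⟩ := median hT d01 d02 d12
    obtain ⟨φ, hφ, hφx⟩ := key_phi hB hv hv' d01 d02 d12
      (fun hc => n01 ((aclass hT hv _ _).mp hc))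
      (fun hc => n02 ((aclass hT hv _ _).mp hc))
      (fun hc => n12 ((aclass hT hv _ _).mp hc))
      (fun hc => n01' ((aclass hT' hv' _ _).mp hc))
      (fun hc => n02' ((aclass hT' hv' _ _).mp hc))
      (fun hc => n12' ((aclass hT' hv' _ _).mp hc))
    exact ⟨v, hv, hv', φ, hφ, hφx⟩
  -- matched vertices have identified partitions
  have hMiff : ∀ {v v'}, MRel m m' a a' v v' →
      ∀ y z, (a v y = a v z ↔ a' v' y = a' v' z) := by
    rintro v v' ⟨hv, hv', φ, hφ, hφx⟩ y z
    constructor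
    · intro h; rw [hφx, hφx, h]
    · intro h; rw [hφx, hφx] at h; exact moebius_injective hφ h
  have hCiff : ∀ {v v'}, MRel m m' a a' v v' →
      ∀ y z, (Conn G v (m y) (m z) ↔ Conn G' v' (m' y) (m' z)) := by
    intro v v' hR y z
    rw [← aclass hT hR.1 y z, ← aclass hT' hR.2.1 y z]
    exact hMiff hR y z
  -- uniqueness of matched partners
  have huniq : ∀ v w v', MRel m m' a a' v v' → MRel m m' a a' w v' → v = w := by
    intro v w v' h1 h2
    by_contra hne
    obtain ⟨x0, x1, x2, d01, d02, d12, n01, n02, n12⟩ := internal_sep hT h1.1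
    have htr : ∀ ya za : X, ¬ Conn G v (m ya) (m za) → ¬ Conn G w (m ya) (m za) :=
      fun ya za hcon hc => hcon ((hCiff h1 ya za).mpr ((hCiff h2 ya za).mp hc))
    exact sep_unique ht hne n01 n02 n12 (htr _ _ n01) (htr _ _ n02) (htr _ _ n12)
  have huniq' : ∀ v v' w', MRel m m' a a' v v' → MRel m m' a a' v w' → v' = w' := by
    intro v v' w' h1 h2
    by_contra hne
    obtain ⟨x0, x1, x2, d01, d02, d12, n01, n02, n12⟩ := internal_sep hT' h1.2.1
    have htr : ∀ ya za : X, ¬ Conn G' v' (m' ya) (m' za) → ¬ Conn G' w' (m' ya) (m' za) :=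
      fun ya za hcon hc => hcon ((hCiff h1 ya za).mp ((hCiff h2 ya za).mpr hc))
    exact sep_unique ht' hne n01 n02 n12 (htr _ _ n01) (htr _ _ n02) (htr _ _ n12)
  -- the maps
  let g0 : V → V' := fun v =>
    if h : v ∈ Set.range m then m' h.choose else (hex v h).choose
  let g1 : V' → V := fun v' =>
    if h : v' ∈ Set.range m' then m h.choose else (hex' v' h).choose
  have hg0leaf : ∀ x, g0 (m x) = m' x := by
    intro x
    have hmem : m x ∈ Set.range m := ⟨x, rfl⟩
    show (if h : m x ∈ Set.range m then m' h.choose else (hex (m x) h).choose) = m' x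
    rw [dif_pos hmem]
    congr 1
    exact hT.marked.inj hmem.choose_spec
  have hg1leaf : ∀ x, g1 (m' x) = m x := by
    intro x
    have hmem : m' x ∈ Set.range m' := ⟨x, rfl⟩
    show (if h : m' x ∈ Set.range m' then m h.choose else (hex' (m' x) h).choose) = m x
    rw [dif_pos hmem]
    congr 1
    exact hT'.marked.inj hmem.choose_spec
  have hg0int : ∀ v (hv : v ∉ Set.range m), MRel m m' a a' v (g0 v) := by
    intro v hv
    show MRel m m' a a' v (if h : v ∈ Set.range m then m' h.choose else (hex v h).choose)
    rw [dif_neg hv]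
    exact (hex v hv).choose_spec
  have hg1int : ∀ v' (hv' : v' ∉ Set.range m'), MRel m m' a a' (g1 v') v' := by
    intro v' hv'
    show MRel m m' a a'
      (if h : v' ∈ Set.range m' then m h.choose else (hex' v' h).choose) v'
    rw [dif_neg hv']
    exact (hex' v' hv').choose_spec
  have hli : Function.LeftInverse g1 g0 := by
    intro v
    by_cases h : v ∈ Set.range m
    · obtain ⟨x, rfl⟩ := h
      rw [hg0leaf, hg1leaf]
    · have hR := hg0int v h
      have h' : g0 v ∉ Set.range m' := hR.2.1
      have hR' := hg1int (g0 v) h'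
      exact (huniq v (g1 (g0 v)) (g0 v) hR hR').symm
  have hri : Function.RightInverse g1 g0 := by
    intro v'
    by_cases h : v' ∈ Set.range m'
    · obtain ⟨x, rfl⟩ := h
      rw [hg1leaf, hg0leaf]
    · have hR := hg1int v' h
      have h' : g1 v' ∉ Set.range m := hR.1
      have hR' := hg0int (g1 v') h'
      exact huniq' (g1 v') (g0 (g1 v')) v' hR' hR
  -- adjacency transfer
  have hadj_li : ∀ (x : X) (w : V), w ∉ Set.range m →
      (G.Adj (m x) w ↔ G'.Adj (m' x) (g0 w)) := by
    intro x w hw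
    have hgw := hg0int w hw
    have e1 : G.Adj w (m x) ↔ ∀ y, a w x = a w y → y = x := by
      rw [adj_leaf_conn hT hw]
      constructor
      · intro h y hy; exact h y ((aclass hT hw x y).mp hy)
      · intro h y hy; exact h y ((aclass hT hw x y).mpr hy)
    have e2 : G'.Adj (g0 w) (m' x) ↔ ∀ y, a' (g0 w) x = a' (g0 w) y → y = x := by
      rw [adj_leaf_conn hT' hgw.2.1]
      constructor
      · intro h y hy; exact h y ((aclass hT' hgw.2.1 x y).mp hy)
      · intro h y hy; exact h y ((aclass hT' hgw.2.1 x y).mpr hy)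
    have e3 : (∀ y, a w x = a w y → y = x) ↔
        (∀ y, a' (g0 w) x = a' (g0 w) y → y = x) := by
      constructor
      · intro h y hy; exact h y ((hMiff hgw x y).mpr hy)
      · intro h y hy; exact h y ((hMiff hgw x y).mp hy)
    rw [G.adj_comm, G'.adj_comm, e1, e2]
    exact e3
  have hadj_iff : ∀ v w : V, G.Adj v w ↔ G'.Adj (g0 v) (g0 w) := by
    intro v w
    by_cases hv : v ∈ Set.range m
    · obtain ⟨x, rfl⟩ := hv
      by_cases hw : w ∈ Set.range m
      · obtain ⟨y, rfl⟩ := hw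
        rw [hg0leaf, hg0leaf]
        exact iff_of_false (no_leaf_adj hT hX x y) (no_leaf_adj hT' hX x y)
      · rw [hg0leaf]
        exact hadj_li x w hw
    · by_cases hw : w ∈ Set.range m
      · obtain ⟨x, rfl⟩ := hw
        rw [G.adj_comm, G'.adj_comm, hg0leaf]
        exact hadj_li x v hv
      · have hgv := hg0int v hv
        have hgw := hg0int w hw
        have e1 : G.Adj v w ↔ ∃ y z, ∀ x, (a v x = a v y ↔ ¬ a w x = a w z) := by
          constructor
          · intro hadj
            obtain ⟨y, z, hyzc⟩ := adj_internal_conn1 hT hadj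
            refine ⟨y, z, fun x => ?_⟩
            rw [aclass hT hv x y, aclass hT hw x z]
            exact hyzc x
          · rintro ⟨y, z, hyzc⟩
            apply adj_internal_conn2 hT hv hw (y := y) (z := z)
            intro x
            rw [← aclass hT hv x y, ← aclass hT hw x z]
            exact hyzc x
        have e2 : G'.Adj (g0 v) (g0 w) ↔
            ∃ y z, ∀ x, (a' (g0 v) x = a' (g0 v) y ↔ ¬ a' (g0 w) x = a' (g0 w) z) := by
          constructor
          · intro hadj
            obtain ⟨y, z, hyzc⟩ := adj_internal_conn1 hT' hadj
            refine ⟨y, z, fun x => ?_⟩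
            rw [aclass hT' hgv.2.1 x y, aclass hT' hgw.2.1 x z]
            exact hyzc x
          · rintro ⟨y, z, hyzc⟩
            apply adj_internal_conn2 hT' hgv.2.1 hgw.2.1 (y := y) (z := z)
            intro x
            rw [← aclass hT' hgv.2.1 x y, ← aclass hT' hgw.2.1 x z]
            exact hyzc x
        rw [e1, e2]
        constructor
        · rintro ⟨y, z, hyzc⟩
          refine ⟨y, z, fun x => ?_⟩
          rw [← hMiff hgv x y, ← hMiff hgw x z]
          exact hyzc x
        · rintro ⟨y, z, hyzc⟩
          refine ⟨y, z, fun x => ?_⟩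
          rw [hMiff hgv x y, hMiff hgw x z]
          exact hyzc x
  refine ⟨⟨⟨g0, g1, hli, hri⟩, ?_⟩, ?_, ?_⟩
  · intro v w
    exact (hadj_iff v w).symm
  · intro x
    exact hg0leaf x
  · intro v hv
    exact (hg0int v hv).2.2

end
end
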